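/- arXiv:2303.03835 — 6 statements merged into one kernel-verified Lean document; each statement's English description precedes it below -/
import Mathlib

section
/- Let A, B, C be real numbers with B > 0 and C < 0, and suppose the quartic polynomial P(X) = X^4 + A X^2 + B X + C has four real roots r1, r2, r3, r4, i.e. P(X) = (X - r1)(X - r2)(X - r3)(X - r4) as polynomials over the reals. Then exactly one of r1, r2, r3, r4 is negative and the other three are strictly positive (in particular no root is zero). -/
/-- If exactly the root at index `j` is negative and the others are positive,
then the negative-count is 1 and the positive-count is 3. -/
lemma count_lemma (r : Fin 4 → ℝ) (j : Fin 4) (hneg : r j < 0)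
    (hpos : ∀ i, i ≠ j → 0 < r i) :
    (Finset.univ.filter fun i => r i < 0).card = 1 ∧
      (Finset.univ.filter fun i => 0 < r i).card = 3 := by
  have h1 : (Finset.univ.filter fun i => r i < 0) = {j} := by
    ext i
    simp only [Finset.mem_filter, Finset.mem_univ, true_and, Finset.mem_singleton]
    constructor
    · intro h
      by_contra hne
      exact absurd (hpos i hne) (by linarith)
    · rintro rfl; exact hneg
  have h2 : (Finset.univ.filter fun i => 0 < r i) = {j}ᶜ := by
    ext i
    simp only [Finset.mem_filter, Finset.mem_univ, true_and, Finset.mem_compl,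
      Finset.mem_singleton]
    constructor
    · intro h
      rintro rfl; linarith
    · intro hne; exact hpos i hne
  constructor
  · rw [h1, Finset.card_singleton]
  · rw [h2, Finset.card_compl, Finset.card_singleton]
    simp

lemma tripleB (a b c d B : ℝ) (hsum : a + b + c + d = 0)
    (h3 : a*b*c + a*b*d + a*c*d + b*c*d = -B) :
    B = (b+c) * (c+d) * (d+b) := by
  linear_combination h3 - (b*c + b*d + c*d) * hsum

lemma tripleContra (a b c d B : ℝ) (hB : 0 < B) (hsum : a + b + c + d = 0)
    (h3 : a*b*c + a*b*d + a*c*d + b*c*d = -B)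
    (hb : b < 0) (hc : c < 0) (hd : d < 0) : False := by
  have hid := tripleB a b c d B hsum h3
  have h1 : (b + c) * (c + d) > 0 :=
    mul_pos_of_neg_of_neg (by linarith) (by linarith)
  have h2 : (b + c) * (c + d) * (d + b) < 0 :=
    mul_neg_of_pos_of_neg h1 (by linarith)
  linarith

set_option maxHeartbeats 1000000 in
/-- a real quartic `X^4 + A X^2 + B X + C` with `B > 0`, `C < 0`
that splits into four real linear factors has exactly one negative root and
three strictly positive roots. -/
theorem stmt0 (A B C : ℝ) (hB : 0 < B) (hC : C < 0) (r : Fin 4 → ℝ)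
    (hfact : ∀ x : ℝ, x ^ 4 + A * x ^ 2 + B * x + C = ∏ i, (x - r i)) :
    (Finset.univ.filter fun i => r i < 0).card = 1 ∧
      (Finset.univ.filter fun i => 0 < r i).card = 3 := by
  have h0 := hfact 0
  have h1 := hfact 1
  have hm1 := hfact (-1)
  have h2 := hfact 2
  have hm2 := hfact (-2)
  simp only [Fin.prod_univ_four] at h0 h1 hm1 h2 hm2
  set a := r 0 with ha_def
  set b := r 1 with hb_def
  set c := r 2 with hc_def
  set d := r 3 with hd_def
  have hsum : a + b + c + d = 0 := by
    linear_combination (1/12) * h2 - (1/12) * hm2 - (1/6) * h1 + (1/6) * hm1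
  have h3 : a*b*c + a*b*d + a*c*d + b*c*d = -B := by
    linear_combination (2/3) * h1 - (2/3) * hm1 - (1/12) * h2 + (1/12) * hm2
  have h4 : a*b*c*d = C := by
    linear_combination -h0
  have hprodneg : a*b*c*d < 0 := by rw [h4]; exact hC
  have hane : a ≠ 0 := by rintro h; rw [h] at hprodneg; simp at hprodneg
  have hbne : b ≠ 0 := by rintro h; rw [h] at hprodneg; simp at hprodneg
  have hcne : c ≠ 0 := by rintro h; rw [h] at hprodneg; simp at hprodneg
  have hdne : d ≠ 0 := by rintro h; rw [h] at hprodneg; simp at hprodneg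
  have key : (a < 0 ∧ 0 < b ∧ 0 < c ∧ 0 < d) ∨ (0 < a ∧ b < 0 ∧ 0 < c ∧ 0 < d) ∨
      (0 < a ∧ 0 < b ∧ c < 0 ∧ 0 < d) ∨ (0 < a ∧ 0 < b ∧ 0 < c ∧ d < 0) := by
    rcases hane.lt_or_gt with ha | ha <;> rcases hbne.lt_or_gt with hb | hb <;>
      rcases hcne.lt_or_gt with hc | hc <;> rcases hdne.lt_or_gt with hd | hd
    · exfalso
      nlinarith [hprodneg, mul_pos (mul_pos_of_neg_of_neg ha hb) (mul_pos_of_neg_of_neg hc hd)]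
    · exact absurd (tripleContra d a b c B hB (by linarith) (by linear_combination h3) ha hb hc) id
    · exact absurd (tripleContra c a b d B hB (by linarith) (by linear_combination h3) ha hb hd) id
    · exfalso
      nlinarith [hprodneg, mul_pos (mul_pos_of_neg_of_neg ha hb) (mul_pos hc hd)]
    · exact absurd (tripleContra b a c d B hB (by linarith) (by linear_combination h3) ha hc hd) id
    · exfalso
      nlinarith [hprodneg, mul_pos (mul_pos_of_neg_of_neg ha hc) (mul_pos hb hd)]
    · exfalso
      nlinarith [hprodneg, mul_pos (mul_pos_of_neg_of_neg ha hd) (mul_pos hb hc)]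
    · exact Or.inl ⟨ha, hb, hc, hd⟩
    · exact absurd (tripleContra a b c d B hB hsum h3 hb hc hd) id
    · exfalso
      nlinarith [hprodneg, mul_pos (mul_pos_of_neg_of_neg hb hc) (mul_pos ha hd)]
    · exfalso
      nlinarith [hprodneg, mul_pos (mul_pos_of_neg_of_neg hb hd) (mul_pos ha hc)]
    · exact Or.inr (Or.inl ⟨ha, hb, hc, hd⟩)
    · exfalso
      nlinarith [hprodneg, mul_pos (mul_pos_of_neg_of_neg hc hd) (mul_pos ha hb)]
    · exact Or.inr (Or.inr (Or.inl ⟨ha, hb, hc, hd⟩))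
    · exact Or.inr (Or.inr (Or.inr ⟨ha, hb, hc, hd⟩))
    · exfalso
      nlinarith [hprodneg, mul_pos (mul_pos (mul_pos ha hb) hc) hd]
  rcases key with ⟨h, hb, hc, hd⟩ | ⟨ha, h, hc, hd⟩ | ⟨ha, hb, h, hd⟩ | ⟨ha, hb, hc, h⟩
  · refine count_lemma r 0 h fun i hi => ?_
    fin_cases i
    · exact absurd rfl hi
    · exact hb
    · exact hc
    · exact hd
  · refine count_lemma r 1 h fun i hi => ?_
    fin_cases i
    · exact ha
    · exact absurd rfl hi
    · exact hc
    · exact hd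
  · refine count_lemma r 2 h fun i hi => ?_
    fin_cases i
    · exact ha
    · exact hb
    · exact absurd rfl hi
    · exact hd
  · refine count_lemma r 3 h fun i hi => ?_
    fin_cases i
    · exact ha
    · exact hb
    · exact hc
    · exact absurd rfl hi
end

section
/- Let A, B, C be real numbers with B < 0 and C < 0, and suppose the quartic polynomial P(X) = X^4 + A X^2 + B X + C has four real roots r1, r2, r3, r4, i.e. P(X) = (X - r1)(X - r2)(X - r3)(X - r4) as polynomials over the reals. Then exactly three of r1, r2, r3, r4 are negative and the remaining one is strictly positive. -/
set_option maxHeartbeats 1000000 in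
/-- a real quartic `X^4 + A X^2 + B X + C` with `B < 0`, `C < 0`
that splits into four real linear factors has exactly three negative roots and
one strictly positive root. -/
theorem stmt1 (A B C : ℝ) (hB : B < 0) (hC : C < 0) (r : Fin 4 → ℝ)
    (hfact : ∀ x : ℝ, x ^ 4 + A * x ^ 2 + B * x + C = ∏ i, (x - r i)) :
    (Finset.univ.filter fun i => r i < 0).card = 3 ∧
      (Finset.univ.filter fun i => 0 < r i).card = 1 := by
  simp only [Fin.prod_univ_four] at hfact
  have h1' := hfact 1
  have hm1 := hfact (-1)
  have h2' := hfact 2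
  have hm2 := hfact (-2)
  have he4 : r 0 * r 1 * r 2 * r 3 = C := by linear_combination -hfact 0
  have he1 : r 0 + r 1 + r 2 + r 3 = 0 := by
    linear_combination (h2' - hm2 - 2*h1' + 2*hm1) / 12
  have he3 : r 0 * r 1 * r 2 + r 0 * r 1 * r 3 + r 0 * r 2 * r 3 + r 1 * r 2 * r 3 = -B := by
    linear_combination (8*(h1' - hm1) - (h2' - hm2)) / 12
  have hne0 : r 0 ≠ 0 := by intro hz; rw [hz] at he4; simp at he4; linarith
  have hne1 : r 1 ≠ 0 := by intro hz; rw [hz] at he4; simp at he4; linarith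
  have hne2 : r 2 ≠ 0 := by intro hz; rw [hz] at he4; simp at he4; linarith
  have hne3 : r 3 ≠ 0 := by intro hz; rw [hz] at he4; simp at he4; linarith
  rcases hne0.lt_or_gt with h0 | h0 <;>
  rcases hne1.lt_or_gt with h1 | h1 <;>
  rcases hne2.lt_or_gt with h2 | h2 <;>
  rcases hne3.lt_or_gt with h3 | h3
  · -- pattern NNNN
    exfalso; nlinarith [he4, mul_pos (mul_pos_of_neg_of_neg h0 h1) (mul_pos_of_neg_of_neg h2 h3)]
  · -- pattern NNNP
    constructor
    · rw [Finset.card_filter, Fin.sum_univ_four, if_pos h0, if_pos h1, if_pos h2, if_neg (asymm h3)]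
    · rw [Finset.card_filter, Fin.sum_univ_four, if_neg (asymm h0), if_neg (asymm h1), if_neg (asymm h2), if_pos h3]
  · -- pattern NNPN
    constructor
    · rw [Finset.card_filter, Fin.sum_univ_four, if_pos h0, if_pos h1, if_neg (asymm h2), if_pos h3]
    · rw [Finset.card_filter, Fin.sum_univ_four, if_neg (asymm h0), if_neg (asymm h1), if_pos h2, if_neg (asymm h3)]
  · -- pattern NNPP
    exfalso; nlinarith [he4, mul_pos (mul_pos_of_neg_of_neg h0 h1) (mul_pos h2 h3)]
  · -- pattern NPNN
    constructor
    · rw [Finset.card_filter, Fin.sum_univ_four, if_pos h0, if_neg (asymm h1), if_pos h2, if_pos h3]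
    · rw [Finset.card_filter, Fin.sum_univ_four, if_neg (asymm h0), if_pos h1, if_neg (asymm h2), if_neg (asymm h3)]
  · -- pattern NPNP
    exfalso; nlinarith [he4, mul_pos (mul_pos_of_neg_of_neg h0 h2) (mul_pos h1 h3)]
  · -- pattern NPPN
    exfalso; nlinarith [he4, mul_pos (mul_pos_of_neg_of_neg h0 h3) (mul_pos h1 h2)]
  · -- pattern NPPP
    exfalso
    have key : r 1 * r 2 * r 3 - (r 1 + r 2 + r 3) * (r 1 * r 2 + r 1 * r 3 + r 2 * r 3) = -B := by
      linear_combination he3 - (r 1 * r 2 + r 1 * r 3 + r 2 * r 3) * he1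
    nlinarith [key, hB, mul_pos (mul_pos h1 h2) h3, mul_pos (mul_pos h1 h1) h2, mul_pos (mul_pos h1 h1) h3, mul_pos (mul_pos h2 h2) h1, mul_pos (mul_pos h2 h2) h3, mul_pos (mul_pos h3 h3) h1, mul_pos (mul_pos h3 h3) h2]
  · -- pattern PNNN
    constructor
    · rw [Finset.card_filter, Fin.sum_univ_four, if_neg (asymm h0), if_pos h1, if_pos h2, if_pos h3]
    · rw [Finset.card_filter, Fin.sum_univ_four, if_pos h0, if_neg (asymm h1), if_neg (asymm h2), if_neg (asymm h3)]
  · -- pattern PNNP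
    exfalso; nlinarith [he4, mul_pos (mul_pos_of_neg_of_neg h1 h2) (mul_pos h0 h3)]
  · -- pattern PNPN
    exfalso; nlinarith [he4, mul_pos (mul_pos_of_neg_of_neg h1 h3) (mul_pos h0 h2)]
  · -- pattern PNPP
    exfalso
    have key : r 0 * r 2 * r 3 - (r 0 + r 2 + r 3) * (r 0 * r 2 + r 0 * r 3 + r 2 * r 3) = -B := by
      linear_combination he3 - (r 0 * r 2 + r 0 * r 3 + r 2 * r 3) * he1
    nlinarith [key, hB, mul_pos (mul_pos h0 h2) h3, mul_pos (mul_pos h0 h0) h2, mul_pos (mul_pos h0 h0) h3, mul_pos (mul_pos h2 h2) h0, mul_pos (mul_pos h2 h2) h3, mul_pos (mul_pos h3 h3) h0, mul_pos (mul_pos h3 h3) h2]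
  · -- pattern PPNN
    exfalso; nlinarith [he4, mul_pos (mul_pos_of_neg_of_neg h2 h3) (mul_pos h0 h1)]
  · -- pattern PPNP
    exfalso
    have key : r 0 * r 1 * r 3 - (r 0 + r 1 + r 3) * (r 0 * r 1 + r 0 * r 3 + r 1 * r 3) = -B := by
      linear_combination he3 - (r 0 * r 1 + r 0 * r 3 + r 1 * r 3) * he1
    nlinarith [key, hB, mul_pos (mul_pos h0 h1) h3, mul_pos (mul_pos h0 h0) h1, mul_pos (mul_pos h0 h0) h3, mul_pos (mul_pos h1 h1) h0, mul_pos (mul_pos h1 h1) h3, mul_pos (mul_pos h3 h3) h0, mul_pos (mul_pos h3 h3) h1]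
  · -- pattern PPPN
    exfalso
    have key : r 0 * r 1 * r 2 - (r 0 + r 1 + r 2) * (r 0 * r 1 + r 0 * r 2 + r 1 * r 2) = -B := by
      linear_combination he3 - (r 0 * r 1 + r 0 * r 2 + r 1 * r 2) * he1
    nlinarith [key, hB, mul_pos (mul_pos h0 h1) h2, mul_pos (mul_pos h0 h0) h1, mul_pos (mul_pos h0 h0) h2, mul_pos (mul_pos h1 h1) h0, mul_pos (mul_pos h1 h1) h2, mul_pos (mul_pos h2 h2) h0, mul_pos (mul_pos h2 h2) h1]
  · -- pattern PPPP
    exfalso; nlinarith [he4, mul_pos (mul_pos h0 h1) (mul_pos h2 h3)]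
end

section
/- Let M > 0, Lambda < 0, and a, Q be real numbers with Lambda*a^2 > -3 and K := a^2 + (1 + Lambda*a^2/3)^2 * Q^2 > 0. Define Delta_r(r) := (r^2 + a^2)(1 - Lambda*r^2/3) - 2*M*r + (1 + Lambda*a^2/3)^2 * Q^2, and set A := a^2 - 3/Lambda, C := -(3/Lambda)*K (so A > 0 and C > 0), and X+ := (2/27) * ( -A^3 + 36*A*C + (A^2 + 12*C)^(3/2) ). Then the following are equivalent: (i) there exist real numbers 0 < r- < r+ such that Delta_r(r-) = Delta_r(r+) = 0, Delta_r'(r-) ≠ 0, Delta_r'(r+) ≠ 0, and Delta_r(r) < 0 for all r in the open interval (r-, r+); (ii) 36*M^2 > Lambda^2 * X+. -/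
/-- The horizon function of the Kerr-Newman-(anti-)de Sitter metric. -/
noncomputable def DeltaR (M Λ a Q : ℝ) (r : ℝ) : ℝ :=
  (r ^ 2 + a ^ 2) * (1 - Λ * r ^ 2 / 3) - 2 * M * r + (1 + Λ * a ^ 2 / 3) ^ 2 * Q ^ 2

open Set

noncomputable def Pq (A C m r : ℝ) : ℝ := r ^ 4 + A * r ^ 2 - 2 * m * r + C

noncomputable def Pq' (A m r : ℝ) : ℝ := 4 * r ^ 3 + 2 * A * r - 2 * m

lemma Pq_hasDerivAt (A C m r : ℝ) : HasDerivAt (Pq A C m) (Pq' A m r) r := by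
  have h1 : HasDerivAt (fun x : ℝ => x ^ 4) (4 * r ^ 3) r := by
    simpa using hasDerivAt_pow 4 r
  have h2 : HasDerivAt (fun x : ℝ => A * x ^ 2) (2 * A * r) r := by
    have := (hasDerivAt_pow 2 r).const_mul A
    simpa [mul_comm, mul_assoc, mul_left_comm] using this
  have h3 : HasDerivAt (fun x : ℝ => 2 * m * x) (2 * m) r := by
    simpa using (hasDerivAt_id r).const_mul (2 * m)
  have h := ((h1.add h2).sub h3).add_const C
  exact h

lemma Pq_cont (A C m : ℝ) : Continuous (Pq A C m) := by
  unfold Pq; continuity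

lemma Pq'_cont (A m : ℝ) : Continuous (Pq' A m) := by
  unfold Pq'; continuity

lemma Pq'_mono {A : ℝ} (hA : 0 < A) (m : ℝ) : StrictMono (Pq' A m) := by
  intro x y hxy
  unfold Pq'
  nlinarith [sq_nonneg (x + y), sq_nonneg x, sq_nonneg y, mul_pos hA (sub_pos.2 hxy),
    
    mul_nonneg (sub_pos.2 hxy).le (sq_nonneg x), mul_nonneg (sub_pos.2 hxy).le (sq_nonneg y),
    mul_nonneg (sub_pos.2 hxy).le (sq_nonneg (x+y))]

/-- If `P a = 0 > P v` with `a < v`, then `P' a < 0`. -/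
lemma Pq'_neg_left {A C m a v : ℝ} (hA : 0 < A) (hav : a < v)
    (ha : Pq A C m a = 0) (hv : Pq A C m v < 0) : Pq' A m a < 0 := by
  obtain ⟨c, hc, hceq⟩ := exists_hasDerivAt_eq_slope (Pq A C m) (Pq' A m) hav
    ((Pq_cont A C m).continuousOn) (fun x _ => Pq_hasDerivAt A C m x)
  have h1 : Pq' A m c < 0 := by
    rw [hceq, ha]
    exact div_neg_of_neg_of_pos (by linarith) (by linarith [hc.1, hc.2])
  exact lt_trans (Pq'_mono hA m hc.1) h1

/-- If `P b = 0 > P v` with `v < b`, then `P' b > 0`. -/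
lemma Pq'_pos_right {A C m b v : ℝ} (hA : 0 < A) (hvb : v < b)
    (hb : Pq A C m b = 0) (hv : Pq A C m v < 0) : 0 < Pq' A m b := by
  obtain ⟨c, hc, hceq⟩ := exists_hasDerivAt_eq_slope (Pq A C m) (Pq' A m) hvb
    ((Pq_cont A C m).continuousOn) (fun x _ => Pq_hasDerivAt A C m x)
  have h1 : 0 < Pq' A m c := by
    rw [hceq, hb]
    exact div_pos (by linarith) (by linarith [hc.1, hc.2])
  exact lt_trans h1 (Pq'_mono hA m hc.2)

/-- Interior negativity: strictly convex `P` vanishing at `a < b` with an interior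
negative value is negative on the whole open interval. -/
lemma Pq_neg_interior {A C m a b v : ℝ} (hA : 0 < A) (ha : Pq A C m a = 0)
    (hb : Pq A C m b = 0) (hv : v ∈ Ioo a b) (hPv : Pq A C m v < 0) :
    ∀ z ∈ Ioo a b, Pq A C m z < 0 := by
  intro z hz
  by_contra hz0
  push_neg at hz0
  rcases lt_trichotomy z v with h | h | h
  · obtain ⟨c1, hc1, hceq1⟩ := exists_hasDerivAt_eq_slope (Pq A C m) (Pq' A m) hz.1
      ((Pq_cont A C m).continuousOn) (fun x _ => Pq_hasDerivAt A C m x)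
    obtain ⟨c2, hc2, hceq2⟩ := exists_hasDerivAt_eq_slope (Pq A C m) (Pq' A m) h
      ((Pq_cont A C m).continuousOn) (fun x _ => Pq_hasDerivAt A C m x)
    have h1 : 0 ≤ Pq' A m c1 := by
      rw [hceq1, ha]
      exact div_nonneg (by linarith) (by linarith [hz.1])
    have h2 : Pq' A m c2 < 0 := by
      rw [hceq2]
      exact div_neg_of_neg_of_pos (by linarith) (by linarith)
    have := Pq'_mono hA m (lt_trans hc1.2 hc2.1)
    linarith
  · rw [h] at hz0; linarith
  · obtain ⟨c1, hc1, hceq1⟩ := exists_hasDerivAt_eq_slope (Pq A C m) (Pq' A m) h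
      ((Pq_cont A C m).continuousOn) (fun x _ => Pq_hasDerivAt A C m x)
    obtain ⟨c2, hc2, hceq2⟩ := exists_hasDerivAt_eq_slope (Pq A C m) (Pq' A m) hz.2
      ((Pq_cont A C m).continuousOn) (fun x _ => Pq_hasDerivAt A C m x)
    have h1 : 0 < Pq' A m c1 := by
      rw [hceq1]
      exact div_pos (by linarith) (by linarith)
    have h2 : Pq' A m c2 ≤ 0 := by
      rw [hceq2, hb]
      have : b - z > 0 := by linarith [hz.2]
      have : (0 - Pq A C m z) ≤ 0 := by linarith
      exact div_nonpos_of_nonpos_of_nonneg this (by linarith [hz.2])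
    have := Pq'_mono hA m (lt_trans hc1.2 hc2.1)
    linarith

set_option maxHeartbeats 2000000 in
theorem quartic_iff (A C m : ℝ) (hA : 0 < A) (hC : 0 < C) (hm : 0 < m) :
    (∃ rm rp : ℝ, 0 < rm ∧ rm < rp ∧ Pq A C m rm = 0 ∧ Pq A C m rp = 0 ∧
        Pq' A m rm ≠ 0 ∧ Pq' A m rp ≠ 0 ∧
        ∀ r ∈ Set.Ioo rm rp, Pq A C m r < 0) ↔
      54 * m ^ 2 > Real.sqrt (A ^ 2 + 12 * C) ^ 3 - A ^ 3 + 36 * A * C := by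
  have hxnn : (0:ℝ) ≤ A ^ 2 + 12 * C := by positivity
  set S := Real.sqrt (A ^ 2 + 12 * C) with hS_def
  have hS2 : S ^ 2 = A ^ 2 + 12 * C := Real.sq_sqrt hxnn
  have hSnn : 0 ≤ S := Real.sqrt_nonneg _
  have hSA : A < S := by nlinarith
  set u := Real.sqrt ((S - A) / 6) with hu_def
  have hu2 : u ^ 2 = (S - A) / 6 := Real.sq_sqrt (by linarith)
  have hu0 : 0 < u := Real.sqrt_pos.2 (by linarith)
  have h4 : u ^ 4 = ((S - A) / 6) ^ 2 := by
    rw [show u ^ 4 = (u ^ 2) ^ 2 by ring, hu2]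
  have h6 : u ^ 6 = ((S - A) / 6) ^ 3 := by
    rw [show u ^ 6 = (u ^ 2) ^ 3 by ring, hu2]
  have hCu : C = 3 * u ^ 4 + A * u ^ 2 := by
    rw [h4, hu2]; nlinarith [hS2]
  have hgu : 0 ≤ 2 * u ^ 3 + A * u := by positivity
  have hgsq : (2 * u ^ 3 + A * u) ^ 2 = (S ^ 3 - A ^ 3 + 36 * A * C) / 54 := by
    linear_combination 4 * h6 + 4 * A * h4 + A ^ 2 * hu2 + (A / 18) * hS2
  have hPu : Pq A C m u = 2 * u * ((2 * u ^ 3 + A * u) - m) := by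
    unfold Pq; linear_combination hCu
  constructor
  · rintro ⟨rm, rp, hrm0, hrmrp, hPrm, hPrp, _, _, hneg⟩
    have hzmem : (rm + rp) / 2 ∈ Ioo rm rp := ⟨by linarith, by linarith⟩
    have hPz : Pq A C m ((rm + rp) / 2) < 0 := hneg _ hzmem
    have hd1 : Pq' A m rm < 0 := Pq'_neg_left hA hzmem.1 hPrm hPz
    have hd2 : 0 < Pq' A m rp := Pq'_pos_right hA hzmem.2 hPrp hPz
    have hsub : Ioo (Pq' A m rm) (Pq' A m rp) ⊆ Pq' A m '' Ioo rm rp :=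
      intermediate_value_Ioo hrmrp.le ((Pq'_cont A m).continuousOn)
    obtain ⟨c, hcmem, hc0⟩ := hsub ⟨hd1, hd2⟩
    have hgc : 2 * c ^ 3 + A * c = m := by
      unfold Pq' at hc0; linarith
    have hc0' : 0 < c := by
      by_contra hcn
      push_neg at hcn
      have h3 : c ^ 3 ≤ 0 := by
        nlinarith [mul_nonpos_of_nonpos_of_nonneg hcn (sq_nonneg c)]
      have hAc : A * c ≤ 0 := mul_nonpos_of_nonneg_of_nonpos hA.le hcn
      linarith
    have hPc : Pq A C m c < 0 := hneg c hcmem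
    have h2mc : 2 * m * c = 4 * c ^ 4 + 2 * A * c ^ 2 := by
      linear_combination (-2 * c) * hgc
    have h3c : C < 3 * c ^ 4 + A * c ^ 2 := by
      unfold Pq at hPc; linarith
    have hcu : u < c := by
      by_contra hcu
      push_neg at hcu
      have hc2 : c ^ 2 ≤ u ^ 2 := by nlinarith
      have hc4 : c ^ 4 ≤ u ^ 4 := by nlinarith
      nlinarith [mul_le_mul_of_nonneg_left hc2 hA.le]
    have hglt : 2 * u ^ 3 + A * u < m := by
      rw [← hgc]
      nlinarith [sq_nonneg (c + u), mul_pos (sub_pos.2 hcu) hA, sq_nonneg c, sq_nonneg u,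
        mul_nonneg (sub_pos.2 hcu).le (sq_nonneg (c + u)),
        mul_nonneg (sub_pos.2 hcu).le (sq_nonneg c),
        mul_nonneg (sub_pos.2 hcu).le (sq_nonneg u)]
    nlinarith [hgsq, hgu, hglt, hm]
  · intro h
    have hglt : 2 * u ^ 3 + A * u < m := by nlinarith
    have hPu_neg : Pq A C m u < 0 := by
      rw [hPu]
      exact mul_neg_of_pos_of_neg (by linarith) (by linarith)
    have hP0 : 0 < Pq A C m 0 := by unfold Pq; simpa using hC
    set R := 2 * m + u + 1 with hR_def
    have hRu : u < R := by linarith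
    have hR1 : 1 ≤ R := by simp only [hR_def]; linarith
    have hR2m : 2 * m < R := by simp only [hR_def]; linarith
    have hR0 : 0 < R := by linarith
    have hR3 : R ≤ R ^ 3 := by
      nlinarith [mul_nonneg (mul_nonneg hR0.le (by linarith : (0:ℝ) ≤ R - 1))
        (by linarith : (0:ℝ) ≤ R + 1)]
    have hmul : R * (2 * m) < R * R ^ 3 :=
      mul_lt_mul_of_pos_left (lt_of_lt_of_le hR2m hR3) hR0
    have hPR : 0 < Pq A C m R := by
      unfold Pq
      nlinarith [hmul, mul_nonneg hA.le (sq_nonneg R), hC]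
    obtain ⟨rm, hrmmem, hrmeq⟩ :=
      intermediate_value_Ioo' (le_of_lt hu0) ((Pq_cont A C m).continuousOn)
        (show (0:ℝ) ∈ Ioo (Pq A C m u) (Pq A C m 0) from ⟨hPu_neg, hP0⟩)
    obtain ⟨rp, hrpmem, hrpeq⟩ :=
      intermediate_value_Ioo (le_of_lt hRu) ((Pq_cont A C m).continuousOn)
        (show (0:ℝ) ∈ Ioo (Pq A C m u) (Pq A C m R) from ⟨hPu_neg, hPR⟩)
    have humem : u ∈ Ioo rm rp := ⟨hrmmem.2, hrpmem.1⟩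
    refine ⟨rm, rp, hrmmem.1, lt_trans hrmmem.2 hrpmem.1, hrmeq, hrpeq, ?_, ?_, ?_⟩
    · exact ne_of_lt (Pq'_neg_left hA hrmmem.2 hrmeq hPu_neg)
    · exact ne_of_gt (Pq'_pos_right hA hrpmem.1 hrpeq hPu_neg)
    · exact Pq_neg_interior hA hrmeq hrpeq humem hPu_neg



set_option maxHeartbeats 1000000 in
/-- for `M > 0`, `Λ < 0`, `Λ a² > -3` and `K > 0`, the sub-extremal
interior hypothesis for the KNAdS horizon function holds iff `36 M² > Λ² X₊`. -/
theorem stmt3 (M Λ a Q : ℝ) (hM : 0 < M) (hΛ : Λ < 0) (hLor : Λ * a ^ 2 > -3)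
    (hK : 0 < a ^ 2 + (1 + Λ * a ^ 2 / 3) ^ 2 * Q ^ 2) :
    (∃ rm rp : ℝ, 0 < rm ∧ rm < rp ∧
        DeltaR M Λ a Q rm = 0 ∧ DeltaR M Λ a Q rp = 0 ∧
        deriv (DeltaR M Λ a Q) rm ≠ 0 ∧ deriv (DeltaR M Λ a Q) rp ≠ 0 ∧
        ∀ r ∈ Set.Ioo rm rp, DeltaR M Λ a Q r < 0) ↔
      36 * M ^ 2 >
        Λ ^ 2 * (2 / 27 *
          (-(a ^ 2 - 3 / Λ) ^ 3 +
            36 * (a ^ 2 - 3 / Λ) *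
              (-(3 / Λ) * (a ^ 2 + (1 + Λ * a ^ 2 / 3) ^ 2 * Q ^ 2)) +
            Real.rpow
              ((a ^ 2 - 3 / Λ) ^ 2 +
                12 * (-(3 / Λ) * (a ^ 2 + (1 + Λ * a ^ 2 / 3) ^ 2 * Q ^ 2)))
              (3 / 2))) := by
  have hΛ0 : Λ ≠ 0 := ne_of_lt hΛ
  have h3Λ : 3 / Λ < 0 := div_neg_of_pos_of_neg (by norm_num) hΛ
  set K := a ^ 2 + (1 + Λ * a ^ 2 / 3) ^ 2 * Q ^ 2 with hK_def
  set A := a ^ 2 - 3 / Λ with hA_def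
  set C := -(3 / Λ) * K with hC_def
  set m := -3 * M / Λ with hm_def
  have hA : 0 < A := by rw [hA_def]; nlinarith [sq_nonneg a]
  have hC : 0 < C := mul_pos (by linarith) hK
  have hm : 0 < m := by
    rw [hm_def]
    exact div_pos_of_neg_of_neg (by linarith) hΛ
  have hfun : DeltaR M Λ a Q = fun r => -Λ / 3 * Pq A C m r := by
    funext r
    rw [hA_def, hC_def, hm_def, hK_def]
    unfold DeltaR Pq
    field_simp
    ring
  have hL : 0 < -Λ / 3 := by linarith
  have hderiv : ∀ r, deriv (DeltaR M Λ a Q) r = -Λ / 3 * Pq' A m r := by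
    intro r
    rw [hfun]
    exact ((Pq_hasDerivAt A C m r).const_mul (-Λ / 3)).deriv
  have heq0 : ∀ r, (DeltaR M Λ a Q r = 0 ↔ Pq A C m r = 0) := by
    intro r; simp only [hfun]
    simp [mul_eq_zero, hL.ne']
  have heqneg : ∀ r, (DeltaR M Λ a Q r < 0 ↔ Pq A C m r < 0) := by
    intro r; simp only [hfun]
    exact ⟨fun h => by nlinarith, fun h => mul_neg_of_pos_of_neg hL h⟩
  have hdne : ∀ r, (deriv (DeltaR M Λ a Q) r ≠ 0 ↔ Pq' A m r ≠ 0) := by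
    intro r; rw [hderiv r]
    simp [mul_eq_zero, hL.ne']
  have hiff1 : (∃ rm rp : ℝ, 0 < rm ∧ rm < rp ∧
      DeltaR M Λ a Q rm = 0 ∧ DeltaR M Λ a Q rp = 0 ∧
      deriv (DeltaR M Λ a Q) rm ≠ 0 ∧ deriv (DeltaR M Λ a Q) rp ≠ 0 ∧
      ∀ r ∈ Set.Ioo rm rp, DeltaR M Λ a Q r < 0) ↔
      (∃ rm rp : ℝ, 0 < rm ∧ rm < rp ∧ Pq A C m rm = 0 ∧ Pq A C m rp = 0 ∧
        Pq' A m rm ≠ 0 ∧ Pq' A m rp ≠ 0 ∧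
        ∀ r ∈ Set.Ioo rm rp, Pq A C m r < 0) := by
    constructor
    · rintro ⟨rm, rp, h1, h2, h3, h4, h5, h6, h7⟩
      exact ⟨rm, rp, h1, h2, (heq0 rm).1 h3, (heq0 rp).1 h4, (hdne rm).1 h5,
        (hdne rp).1 h6, fun r hr => (heqneg r).1 (h7 r hr)⟩
    · rintro ⟨rm, rp, h1, h2, h3, h4, h5, h6, h7⟩
      exact ⟨rm, rp, h1, h2, (heq0 rm).2 h3, (heq0 rp).2 h4, (hdne rm).2 h5,
        (hdne rp).2 h6, fun r hr => (heqneg r).2 (h7 r hr)⟩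
  have hxnn : (0:ℝ) ≤ A ^ 2 + 12 * C := by positivity
  have hrpow : Real.rpow (A ^ 2 + 12 * C) (3 / 2) = Real.sqrt (A ^ 2 + 12 * C) ^ 3 := by
    rw [Real.sqrt_eq_rpow, ← Real.rpow_natCast ((A ^ 2 + 12 * C) ^ ((1:ℝ)/2)) 3,
      ← Real.rpow_mul hxnn]
    norm_num
  have hm2 : m ^ 2 * Λ ^ 2 = 9 * M ^ 2 := by
    rw [hm_def]; field_simp; ring
  clear_value K A C m
  have hΛsq : 0 < Λ ^ 2 := by positivity
  have harith : (36 * M ^ 2 >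
      Λ ^ 2 * (2 / 27 * (-A ^ 3 + 36 * A * C + Real.sqrt (A ^ 2 + 12 * C) ^ 3))) ↔
      54 * m ^ 2 > Real.sqrt (A ^ 2 + 12 * C) ^ 3 - A ^ 3 + 36 * A * C := by
    constructor
    · intro h
      by_contra hcon
      push_neg at hcon
      have hprod := mul_le_mul_of_nonneg_left hcon hΛsq.le
      nlinarith [hprod, hm2, h]
    · intro h
      by_contra hcon
      push_neg at hcon
      have hprod := mul_lt_mul_of_pos_left h hΛsq
      nlinarith [hprod, hm2, hcon]
  rw [hrpow]
  exact (hiff1.trans (quartic_iff A C m hA hC hm)).trans harith.symm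
end

section
/- Let M > 0, Lambda > 0, and a, Q be real numbers with K := a^2 + (1 + Lambda*a^2/3)^2 * Q^2 > 0. Define Delta_r(r) := (r^2 + a^2)(1 - Lambda*r^2/3) - 2*M*r + (1 + Lambda*a^2/3)^2 * Q^2, and set A := a^2 - 3/Lambda, C := -(3/Lambda)*K, and X± := (2/27) * ( -A^3 + 36*A*C ± (A^2 + 12*C)^(3/2) ), where x^(3/2) denotes the real power (which is well-defined since the second condition below is equivalent to A^2 + 12*C > 0). Then the following are equivalent: (i) there exist real numbers 0 < r- < r+ such that Delta_r(r-) = Delta_r(r+) = 0, Delta_r'(r-) ≠ 0, Delta_r'(r+) ≠ 0, and Delta_r(r) < 0 for all r in the open interval (r-, r+); (ii) Lambda*a^2 < 3, and 4*Lambda*(Lambda*a^2 + 3)^2 * Q^2 < Lambda^2*a^4 - 42*Lambda*a^2 + 9, and Lambda^2 * X- < 36*M^2 < Lambda^2 * X+. -/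
open Set Filter

private lemma hasDerivF (Λ b M K x : ℝ) :
    HasDerivAt (fun r : ℝ => -Λ/3*r^4 + b*r^2 - 2*M*r + K) (-(4*Λ/3)*x^3 + 2*b*x - 2*M) x := by
  have h4 : HasDerivAt (fun r : ℝ => r^4) (4*x^3) x := by simpa using hasDerivAt_pow 4 x
  have h2 : HasDerivAt (fun r : ℝ => r^2) (2*x) x := by simpa using hasDerivAt_pow 2 x
  have h1 : HasDerivAt (fun r : ℝ => r) 1 x := hasDerivAt_id x
  have := (((h4.const_mul (-Λ/3)).add (h2.const_mul b)).sub (h1.const_mul (2*M))).add_const K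
  exact this.congr_deriv (by ring)

private lemma slope_neg_left {f : ℝ → ℝ} {d x y : ℝ} (hxy : x < y)
    (hd : HasDerivAt f d x) (hx : f x = 0)
    (hneg : ∀ r ∈ Set.Ioo x y, f r < 0) (hne : d ≠ 0) : d < 0 := by
  rcases hne.lt_or_gt with h | h
  · exact h
  exfalso
  rw [hasDerivAt_iff_tendsto_slope] at hd
  have h1 : ∀ᶠ z in nhdsWithin x {x}ᶜ, 0 < slope f x z := hd.eventually (eventually_gt_nhds h)
  have h2 : nhdsWithin x (Set.Ioi x) ≤ nhdsWithin x {x}ᶜ :=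
    nhdsWithin_mono x (fun z hz => ne_of_gt hz)
  have h3 : ∀ᶠ z in nhdsWithin x (Set.Ioi x), 0 < slope f x z := h1.filter_mono h2
  have h4 : Set.Ioo x y ∈ nhdsWithin x (Set.Ioi x) :=
    Ioo_mem_nhdsGT_of_mem ⟨le_refl x, hxy⟩
  obtain ⟨z, hz1, hz2⟩ := (h3.and (eventually_of_mem h4 (fun z hz => hz))).exists
  have hz3 := hneg z hz2
  rw [slope_def_field] at hz1
  have hzx : 0 < z - x := sub_pos.2 hz2.1
  have := mul_pos hz1 hzx
  rw [div_mul_cancel₀ _ (ne_of_gt hzx)] at this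
  rw [hx] at this
  linarith

private lemma slope_pos_right {f : ℝ → ℝ} {d x y : ℝ} (hxy : x < y)
    (hd : HasDerivAt f d y) (hy : f y = 0)
    (hneg : ∀ r ∈ Set.Ioo x y, f r < 0) (hne : d ≠ 0) : 0 < d := by
  rcases hne.lt_or_gt with h | h
  swap
  · exact h
  exfalso
  rw [hasDerivAt_iff_tendsto_slope] at hd
  have h1 : ∀ᶠ z in nhdsWithin y {y}ᶜ, slope f y z < 0 := hd.eventually (eventually_lt_nhds h)
  have h2 : nhdsWithin y (Set.Iio y) ≤ nhdsWithin y {y}ᶜ :=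
    nhdsWithin_mono y (fun z hz => ne_of_lt hz)
  have h3 : ∀ᶠ z in nhdsWithin y (Set.Iio y), slope f y z < 0 := h1.filter_mono h2
  have h4 : Set.Ioo x y ∈ nhdsWithin y (Set.Iio y) :=
    Ioo_mem_nhdsLT_of_mem ⟨hxy, le_refl y⟩
  obtain ⟨z, hz1, hz2⟩ := (h3.and (eventually_of_mem h4 (fun z hz => hz))).exists
  have hz3 := hneg z hz2
  rw [slope_def_field] at hz1
  have hzy : z - y < 0 := sub_neg.2 hz2.2
  have := mul_pos_of_neg_of_neg hz1 hzy
  rw [div_mul_cancel₀ _ (ne_of_lt hzy)] at this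
  rw [hy] at this
  linarith

set_option maxHeartbeats 2000000 in
private lemma core2 (M Λ b K : ℝ) (f : ℝ → ℝ)
    (hf : f = fun r : ℝ => -Λ/3*r^4 + b*r^2 - 2*M*r + K)
    (hM : 0 < M) (hΛ : 0 < Λ) (hK : 0 < K)
    (hb : 0 < b) (hD : 0 < b^2 - 4*Λ*K) :
    (∃ rm rp : ℝ, 0 < rm ∧ rm < rp ∧ f rm = 0 ∧ f rp = 0 ∧
        deriv f rm ≠ 0 ∧ deriv f rp ≠ 0 ∧ ∀ r ∈ Set.Ioo rm rp, f r < 0) ↔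
      (2*((b^3 + 12*Λ*b*K) - (b^2 - 4*Λ*K)*Real.sqrt (b^2 - 4*Λ*K)) < 36*Λ*M^2 ∧
        36*Λ*M^2 < 2*((b^3 + 12*Λ*b*K) + (b^2 - 4*Λ*K)*Real.sqrt (b^2 - 4*Λ*K))) := by
  have hΛ' : (Λ : ℝ) ≠ 0 := ne_of_gt hΛ
  have hfd : ∀ x, HasDerivAt f (-(4*Λ/3)*x^3 + 2*b*x - 2*M) x := by
    rw [hf]; exact hasDerivF Λ b M K
  have hfderiv : ∀ x, deriv f x = -(4*Λ/3)*x^3 + 2*b*x - 2*M := fun x => (hfd x).deriv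
  have hfval : ∀ x, f x = -Λ/3*x^4 + b*x^2 - 2*M*x + K := by rw [hf]; intro x; rfl
  obtain ⟨e, hedef⟩ : ∃ x : ℝ, x = Real.sqrt (b^2 - 4*Λ*K) := ⟨_, rfl⟩
  rw [← hedef]
  have he0 : 0 < e := by rw [hedef]; exact Real.sqrt_pos.2 hD
  have he2 : e^2 = b^2 - 4*Λ*K := by rw [hedef]; exact Real.sq_sqrt hD.le
  have heb : e < b := by nlinarith only [mul_pos hΛ hK, he2, he0, hb]
  obtain ⟨s1, hs1def⟩ : ∃ x : ℝ, x = (b - e)/(2*Λ) := ⟨_, rfl⟩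
  obtain ⟨s2, hs2def⟩ : ∃ x : ℝ, x = (b + e)/(2*Λ) := ⟨_, rfl⟩
  have hs1 : 0 < s1 := by rw [hs1def]; exact div_pos (by linarith) (by linarith)
  have hs2 : 0 < s2 := by rw [hs2def]; exact div_pos (by linarith) (by linarith)
  have hs12 : s1 < s2 := by
    rw [hs1def, hs2def, div_lt_div_iff₀ (by linarith) (by linarith)]
    nlinarith only [mul_pos he0 hΛ]
  have Pfact : ∀ r : ℝ, Λ*r^4 - b*r^2 + K = Λ*(r^2 - s1)*(r^2 - s2) := by
    intro r
    rw [hs1def, hs2def]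
    field_simp
    linear_combination he2
  obtain ⟨q1, hq1def⟩ : ∃ x : ℝ, x = Real.sqrt s1 := ⟨_, rfl⟩
  obtain ⟨q2, hq2def⟩ : ∃ x : ℝ, x = Real.sqrt s2 := ⟨_, rfl⟩
  have hq1 : 0 < q1 := by rw [hq1def]; exact Real.sqrt_pos.2 hs1
  have hq2 : 0 < q2 := by rw [hq2def]; exact Real.sqrt_pos.2 hs2
  have hq1s : q1^2 = s1 := by rw [hq1def]; exact Real.sq_sqrt hs1.le
  have hq2s : q2^2 = s2 := by rw [hq2def]; exact Real.sq_sqrt hs2.le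
  have hq12 : q1 < q2 := by rw [hq1def, hq2def]; exact Real.sqrt_lt_sqrt hs1.le hs12
  have hPpos : ∀ r : ℝ, 0 ≤ r → r < q1 → 0 < Λ*r^4 - b*r^2 + K := by
    intro r h0 h1
    rw [Pfact]
    have h2 : r^2 < s1 := by rw [← hq1s]; exact pow_lt_pow_left₀ h1 h0 two_ne_zero
    nlinarith only [mul_pos (mul_pos hΛ (sub_pos.2 h2)) (sub_pos.2 (h2.trans hs12))]
  have hPneg : ∀ r : ℝ, q1 < r → r < q2 → Λ*r^4 - b*r^2 + K < 0 := by
    intro r h1 h2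
    rw [Pfact]
    have h3 : s1 < r^2 := by rw [← hq1s]; exact pow_lt_pow_left₀ h1 hq1.le two_ne_zero
    have h4 : r^2 < s2 := by rw [← hq2s]; exact pow_lt_pow_left₀ h2 (hq1.le.trans h1.le) two_ne_zero
    nlinarith only [mul_pos (mul_pos hΛ (sub_pos.2 h3)) (sub_pos.2 h4)]
  obtain ⟨h, hhdef⟩ : ∃ g : ℝ → ℝ, g = fun r : ℝ => (-Λ/3*r^4 + b*r^2 + K)/r := ⟨_, rfl⟩
  have hhd : ∀ x : ℝ, x ≠ 0 → HasDerivAt h (-(Λ*x^4 - b*x^2 + K)/x^2) x := by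
    intro x hx
    have h4 : HasDerivAt (fun r : ℝ => r^4) (4*x^3) x := by simpa using hasDerivAt_pow 4 x
    have h2 : HasDerivAt (fun r : ℝ => r^2) (2*x) x := by simpa using hasDerivAt_pow 2 x
    have hnum : HasDerivAt (fun r : ℝ => -Λ/3*r^4 + b*r^2 + K) (-Λ/3*(4*x^3) + b*(2*x)) x :=
      ((h4.const_mul (-Λ/3)).add (h2.const_mul b)).add_const K
    have hdd := hnum.div (hasDerivAt_id x) hx
    simp only [id_eq] at hdd
    rw [hhdef]
    refine hdd.congr_deriv ?_
    rw [div_eq_div_iff (pow_ne_zero 2 hx) (pow_ne_zero 2 hx)]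
    ring
  have hcont : ∀ u v : ℝ, 0 < u → ContinuousOn h (Set.Icc u v) := by
    intro u v hu x hx
    exact ((hhd x (ne_of_gt (lt_of_lt_of_le hu hx.1))).continuousAt).continuousWithinAt
  have hanti : ∀ u v : ℝ, 0 < u →
      (∀ r, u < r → r < v → 0 < Λ*r^4 - b*r^2 + K) → StrictAntiOn h (Set.Icc u v) := by
    intro u v hu hP
    apply strictAntiOn_of_deriv_neg (convex_Icc u v) (hcont u v hu)
    intro x hx
    rw [interior_Icc] at hx
    have hx0 : 0 < x := lt_trans hu hx.1
    rw [(hhd x (ne_of_gt hx0)).deriv]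
    exact div_neg_of_neg_of_pos (by linarith [hP x hx.1 hx.2]) (pow_pos hx0 2)
  have hmono : ∀ u v : ℝ, 0 < u →
      (∀ r, u < r → r < v → Λ*r^4 - b*r^2 + K < 0) → StrictMonoOn h (Set.Icc u v) := by
    intro u v hu hP
    apply strictMonoOn_of_deriv_pos (convex_Icc u v) (hcont u v hu)
    intro x hx
    rw [interior_Icc] at hx
    have hx0 : 0 < x := lt_trans hu hx.1
    rw [(hhd x (ne_of_gt hx0)).deriv]
    exact div_pos (by linarith [hP x hx.1 hx.2]) (pow_pos hx0 2)
  have hroot2M : ∀ x : ℝ, 0 < x → f x = 0 → h x = 2*M := by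
    intro x hx hx0
    rw [hfval] at hx0
    rw [hhdef]
    show (-Λ/3*x^4 + b*x^2 + K)/x = 2*M
    rw [div_eq_iff (ne_of_gt hx)]
    linear_combination hx0
  have hId : ∀ x : ℝ, f x = 0 → x * deriv f x = -(Λ*x^4 - b*x^2 + K) := by
    intro x hx
    rw [hfval] at hx
    rw [hfderiv]
    linear_combination hx
  have hPs1 : Λ*s1^2 - b*s1 + K = 0 := by
    rw [hs1def]; field_simp; linear_combination he2
  have hPs2 : Λ*s2^2 - b*s2 + K = 0 := by
    rw [hs2def]; field_simp; linear_combination he2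
  have hv1 : h q1 = 2/3*(b*s1 + 2*K)/q1 := by
    rw [hhdef]
    show (-Λ/3*q1^4 + b*q1^2 + K)/q1 = 2/3*(b*s1 + 2*K)/q1
    have h4 : q1^4 = s1^2 := by rw [← hq1s]; ring
    rw [h4, hq1s]
    congr 1
    linear_combination (-(1:ℝ)/3)*hPs1
  have hv2 : h q2 = 2/3*(b*s2 + 2*K)/q2 := by
    rw [hhdef]
    show (-Λ/3*q2^4 + b*q2^2 + K)/q2 = 2/3*(b*s2 + 2*K)/q2
    have h4 : q2^4 = s2^2 := by rw [← hq2s]; ring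
    rw [h4, hq2s]
    congr 1
    linear_combination (-(1:ℝ)/3)*hPs2
  have hpos1 : 0 < h q1 := by
    rw [hv1]; exact div_pos (by nlinarith only [mul_pos hb hs1, hK]) hq1
  have hpos2 : 0 < h q2 := by
    rw [hv2]; exact div_pos (by nlinarith only [mul_pos hb hs2, hK]) hq2
  have base1 : 4*(b*s1 + 2*K)^2*Λ = 2*((b^3 + 12*Λ*b*K) - (b^2 - 4*Λ*K)*e)*s1 := by
    rw [hs1def]; field_simp; linear_combination 16*Λ*K*he2
  have base2 : 4*(b*s2 + 2*K)^2*Λ = 2*((b^3 + 12*Λ*b*K) + (b^2 - 4*Λ*K)*e)*s2 := by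
    rw [hs2def]; field_simp; linear_combination 16*Λ*K*he2
  have hkey1 : 9*(h q1)^2 = 2*((b^3 + 12*Λ*b*K) - (b^2 - 4*Λ*K)*e)/Λ := by
    have h9 : 9*(h q1)^2 = 4*(b*s1 + 2*K)^2/s1 := by
      rw [hv1, div_pow, hq1s]; ring
    rw [h9, div_eq_div_iff (ne_of_gt hs1) hΛ']
    linear_combination base1
  have hkey2 : 9*(h q2)^2 = 2*((b^3 + 12*Λ*b*K) + (b^2 - 4*Λ*K)*e)/Λ := by
    have h9 : 9*(h q2)^2 = 4*(b*s2 + 2*K)^2/s2 := by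
      rw [hv2, div_pow, hq2s]; ring
    rw [h9, div_eq_div_iff (ne_of_gt hs2) hΛ']
    linear_combination base2
  constructor
  · rintro ⟨rm, rp, hrm0, hrmrp, hfrm, hfrp, hdm, hdp, hneg⟩
    have hrp0 : 0 < rp := hrm0.trans hrmrp
    have hdm' : rm * deriv f rm < 0 := by
      rw [hfderiv rm] at hdm ⊢
      exact mul_neg_of_pos_of_neg hrm0 (slope_neg_left hrmrp (hfd rm) hfrm hneg hdm)
    have hdp' : 0 < rp * deriv f rp := by
      rw [hfderiv rp] at hdp ⊢
      exact mul_pos hrp0 (slope_pos_right hrmrp (hfd rp) hfrp hneg hdp)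
    have hPm : 0 < Λ*rm^4 - b*rm^2 + K := by
      have := hId rm hfrm; linarith
    have hPp : Λ*rp^4 - b*rp^2 + K < 0 := by
      have := hId rp hfrp; linarith
    have hprodp : (rp^2 - s1)*(rp^2 - s2) < 0 := by
      rw [Pfact] at hPp
      by_contra hc
      push_neg at hc
      nlinarith only [hPp, mul_nonneg hΛ.le hc]
    have hs1rp : s1 < rp^2 := by
      by_contra hc
      push_neg at hc
      nlinarith only [hprodp, mul_nonneg (sub_nonneg.2 hc) (by linarith : (0:ℝ) ≤ s2 - rp^2)]
    have hrp2s2 : rp^2 < s2 := by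
      by_contra hc
      push_neg at hc
      nlinarith only [hprodp, mul_nonneg (by linarith : (0:ℝ) ≤ rp^2 - s1) (sub_nonneg.2 hc)]
    have hprodm : 0 < (rm^2 - s1)*(rm^2 - s2) := by
      rw [Pfact] at hPm
      by_contra hc
      push_neg at hc
      nlinarith only [hPm, mul_nonneg hΛ.le (neg_nonneg.2 hc)]
    have hrm2s2 : rm^2 < s2 := by
      have := pow_lt_pow_left₀ hrmrp hrm0.le two_ne_zero
      linarith
    have hrm2s1 : rm^2 < s1 := by
      by_contra hc
      push_neg at hc
      nlinarith only [hprodm, mul_nonneg (sub_nonneg.2 hc) (by linarith : (0:ℝ) ≤ s2 - rm^2)]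
    have hrmq1 : rm < q1 := by
      rw [hq1def]
      have := Real.sqrt_lt_sqrt (sq_nonneg rm) hrm2s1
      rwa [Real.sqrt_sq hrm0.le] at this
    have hq1rp : q1 < rp := by
      rw [hq1def]
      have := Real.sqrt_lt_sqrt hs1.le hs1rp
      rwa [Real.sqrt_sq hrp0.le] at this
    have hrpq2 : rp < q2 := by
      rw [hq2def]
      have := Real.sqrt_lt_sqrt (sq_nonneg rp) hrp2s2
      rwa [Real.sqrt_sq hrp0.le] at this
    have hrmv : h rm = 2*M := hroot2M rm hrm0 hfrm
    have hrpv : h rp = 2*M := hroot2M rp hrp0 hfrp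
    have h1lt : h q1 < 2*M := by
      have anti := hanti rm q1 hrm0 (fun s hs1' hs2' => hPpos s (hrm0.trans hs1').le hs2')
      have := anti ⟨le_refl rm, hrmq1.le⟩ ⟨hrmq1.le, le_refl q1⟩ hrmq1
      rwa [hrmv] at this
    have h2gt : 2*M < h q2 := by
      have mono := hmono rp q2 hrp0 (fun s hs1' hs2' => hPneg s (hq1rp.trans hs1') hs2')
      have := mono ⟨le_refl rp, hrpq2.le⟩ ⟨hrpq2.le, le_refl q2⟩ hrpq2
      rwa [hrpv] at this
    constructor
    · have e1 : 9*(h q1)^2 < 36*M^2 := by nlinarith only [hpos1, hM, h1lt]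
      rw [hkey1, div_lt_iff₀ hΛ] at e1
      linarith
    · have e2 : 36*M^2 < 9*(h q2)^2 := by nlinarith only [hM, h2gt]
      rw [hkey2, lt_div_iff₀ hΛ] at e2
      linarith
  · rintro ⟨hlt1, hlt2⟩
    have e1 : 9*(h q1)^2 < 36*M^2 := by
      rw [hkey1, div_lt_iff₀ hΛ]; linarith
    have h1lt : h q1 < 2*M := by nlinarith only [hpos1, hM, e1]
    have e2 : 36*M^2 < 9*(h q2)^2 := by
      rw [hkey2, lt_div_iff₀ hΛ]; linarith
    have h2gt : 2*M < h q2 := by nlinarith only [hpos2, hM, e2]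
    obtain ⟨r0, hr0def⟩ : ∃ x : ℝ, x = min (q1/2) (K/(2*M+1)) := ⟨_, rfl⟩
    have hr00 : 0 < r0 := by
      rw [hr0def]
      exact lt_min (by positivity) (by positivity)
    have hr0q : r0 < q1 := by
      rw [hr0def]
      exact (min_le_left _ _).trans_lt (by linarith)
    have hr0q' : r0 ≤ q1 := hr0q.le
    have hr0s : r0^2 ≤ s1 := by
      rw [← hq1s]
      exact pow_le_pow_left₀ hr00.le hr0q' 2
    have h2L1 : 2*Λ*s1 = b - e := by rw [hs1def]; field_simp
    have hΛs1 : Λ*s1 ≤ b := by linarith only [h2L1, he0, hb]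
    have hA : Λ*r0^2 ≤ b := by nlinarith only [hΛs1, mul_nonneg hΛ.le (sub_nonneg.2 hr0s)]
    have hgK : K ≤ -Λ/3*r0^4 + b*r0^2 + K := by
      nlinarith only [mul_nonneg (sub_nonneg.2 hA) (sq_nonneg r0),
        mul_nonneg hΛ.le (pow_nonneg hr00.le 4)]
    have hKr : (2*M+1)*r0 ≤ K := by
      have h1 : r0 ≤ K/(2*M+1) := by rw [hr0def]; exact min_le_right _ _
      have := (le_div_iff₀ (by linarith : (0:ℝ) < 2*M+1)).1 h1
      linarith
    have hhr0 : 2*M < h r0 := by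
      have h1 : K/r0 ≤ h r0 := by
        rw [hhdef]
        show K/r0 ≤ (-Λ/3*r0^4 + b*r0^2 + K)/r0
        exact (div_le_div_iff_of_pos_right hr00).2 hgK
      have h2' : 2*M+1 ≤ K/r0 := (le_div_iff₀ hr00).2 (by linarith)
      linarith
    have hmem : 2*M ∈ Set.Icc (h q1) (h r0) := ⟨h1lt.le, by linarith⟩
    obtain ⟨rm, hrmI, hrmv⟩ := intermediate_value_Icc' hr0q.le (hcont r0 q1 hr00) hmem
    have hrm0 : 0 < rm := lt_of_lt_of_le hr00 hrmI.1
    have hrmq1 : rm < q1 := lt_of_le_of_ne hrmI.2 (by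
      intro heq; rw [heq] at hrmv; linarith)
    have hfrm : f rm = 0 := by
      rw [hfval]
      have h2' := hrmv
      simp only [hhdef] at h2'
      rw [div_eq_iff hrm0.ne'] at h2'
      linear_combination h2'
    have hmem2 : 2*M ∈ Set.Icc (h q1) (h q2) := ⟨h1lt.le, h2gt.le⟩
    obtain ⟨rp, hrpI, hrpv⟩ := intermediate_value_Icc hq12.le (hcont q1 q2 hq1) hmem2
    have hq1rp : q1 < rp := lt_of_le_of_ne hrpI.1 (by
      intro heq; rw [← heq] at hrpv; linarith)
    have hrpq2 : rp < q2 := lt_of_le_of_ne hrpI.2 (by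
      intro heq; rw [heq] at hrpv; linarith)
    have hrp0 : 0 < rp := hq1.trans hq1rp
    have hfrp : f rp = 0 := by
      rw [hfval]
      have h2' := hrpv
      simp only [hhdef] at h2'
      rw [div_eq_iff hrp0.ne'] at h2'
      linear_combination h2'
    refine ⟨rm, rp, hrm0, hrmq1.trans hq1rp, hfrm, hfrp, ?_, ?_, ?_⟩
    · have hid := hId rm hfrm
      have hP := hPpos rm hrm0.le hrmq1
      intro h0
      rw [h0, mul_zero] at hid
      linarith
    · have hid := hId rp hfrp
      have hP := hPneg rp hq1rp hrpq2
      intro h0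
      rw [h0, mul_zero] at hid
      linarith
    · intro r hr
      obtain ⟨hr1, hr2⟩ := hr
      have hr0' : 0 < r := hrm0.trans hr1
      have hhr : h r < 2*M := by
        rcases le_or_gt r q1 with hrq | hrq
        · have anti := hanti rm q1 hrm0 (fun s hs1' hs2' => hPpos s (hrm0.trans hs1').le hs2')
          have h3' := anti ⟨le_refl rm, hrmq1.le⟩ ⟨hr1.le, hrq⟩ hr1
          rwa [hrmv] at h3'
        · have mono := hmono q1 rp hq1 (fun s hs1' hs2' => hPneg s hs1' (hs2'.trans hrpq2))
          have h3' := mono ⟨hrq.le, hr2.le⟩ ⟨hq1rp.le, le_refl rp⟩ hr2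
          rwa [hrpv] at h3'
      rw [hfval]
      simp only [hhdef] at hhr
      rw [div_lt_iff₀ hr0'] at hhr
      linarith

set_option maxHeartbeats 1000000 in
private lemma core (M Λ b K : ℝ) (f : ℝ → ℝ)
    (hf : f = fun r : ℝ => -Λ/3*r^4 + b*r^2 - 2*M*r + K)
    (hM : 0 < M) (hΛ : 0 < Λ) (hK : 0 < K) :
    (∃ rm rp : ℝ, 0 < rm ∧ rm < rp ∧ f rm = 0 ∧ f rp = 0 ∧
        deriv f rm ≠ 0 ∧ deriv f rp ≠ 0 ∧ ∀ r ∈ Set.Ioo rm rp, f r < 0) ↔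
      (0 < b ∧ 0 < b^2 - 4*Λ*K ∧
        2*((b^3 + 12*Λ*b*K) - (b^2 - 4*Λ*K)*Real.sqrt (b^2 - 4*Λ*K)) < 36*Λ*M^2 ∧
        36*Λ*M^2 < 2*((b^3 + 12*Λ*b*K) + (b^2 - 4*Λ*K)*Real.sqrt (b^2 - 4*Λ*K))) := by
  constructor
  · intro hex
    obtain ⟨rm, rp, hrm0, hrmrp, hfrm, hfrp, hdm, hdp, hneg⟩ := hex
    have hfd : ∀ x, HasDerivAt f (-(4*Λ/3)*x^3 + 2*b*x - 2*M) x := by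
      rw [hf]; exact hasDerivF Λ b M K
    have hfderiv : ∀ x, deriv f x = -(4*Λ/3)*x^3 + 2*b*x - 2*M := fun x => (hfd x).deriv
    have hfval : ∀ x, f x = -Λ/3*x^4 + b*x^2 - 2*M*x + K := by rw [hf]; intro x; rfl
    have hrp0 : 0 < rp := hrm0.trans hrmrp
    have hdp' : 0 < rp * deriv f rp := by
      rw [hfderiv rp] at hdp ⊢
      exact mul_pos hrp0 (slope_pos_right hrmrp (hfd rp) hfrp hneg hdp)
    have hId : rp * deriv f rp = -(Λ*rp^4 - b*rp^2 + K) := by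
      have hx := hfrp
      rw [hfval] at hx
      rw [hfderiv]
      linear_combination hx
    have hPp : Λ*rp^4 - b*rp^2 + K < 0 := by linarith
    have hb : 0 < b := by
      rcases le_or_gt b 0 with hc | hc
      · exfalso
        have h1 : b*rp^2 ≤ 0 := mul_nonpos_of_nonpos_of_nonneg hc (sq_nonneg rp)
        nlinarith only [hPp, h1, hK, mul_pos hΛ (pow_pos hrp0 4)]
      · exact hc
    have hD : 0 < b^2 - 4*Λ*K := by
      nlinarith only [sq_nonneg (2*Λ*rp^2 - b), mul_pos hΛ (neg_pos.2 hPp), hPp]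
    exact ⟨hb, hD, (core2 M Λ b K f hf hM hΛ hK hb hD).1
      ⟨rm, rp, hrm0, hrmrp, hfrm, hfrp, hdm, hdp, hneg⟩⟩
  · rintro ⟨hb, hD, h1, h2⟩
    exact (core2 M Λ b K f hf hM hΛ hK hb hD).2 ⟨h1, h2⟩


set_option maxHeartbeats 1000000 in
/-- for `M > 0`, `Λ > 0` and `K > 0`, the sub-extremal interior
hypothesis for the KNdS horizon function holds iff `Λ a² < 3`,
`4Λ(Λa²+3)²Q² < Λ²a⁴ - 42Λa² + 9` and `Λ² X₋ < 36 M² < Λ² X₊`. -/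
theorem stmt4 (M Λ a Q : ℝ) (hM : 0 < M) (hΛ : 0 < Λ)
    (hK : 0 < a ^ 2 + (1 + Λ * a ^ 2 / 3) ^ 2 * Q ^ 2) :
    (∃ rm rp : ℝ, 0 < rm ∧ rm < rp ∧
        DeltaR M Λ a Q rm = 0 ∧ DeltaR M Λ a Q rp = 0 ∧
        deriv (DeltaR M Λ a Q) rm ≠ 0 ∧ deriv (DeltaR M Λ a Q) rp ≠ 0 ∧
        ∀ r ∈ Set.Ioo rm rp, DeltaR M Λ a Q r < 0) ↔
      (Λ * a ^ 2 < 3 ∧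
        4 * Λ * (Λ * a ^ 2 + 3) ^ 2 * Q ^ 2 < Λ ^ 2 * a ^ 4 - 42 * Λ * a ^ 2 + 9 ∧
        Λ ^ 2 * (2 / 27 *
            (-(a ^ 2 - 3 / Λ) ^ 3 +
              36 * (a ^ 2 - 3 / Λ) *
                (-(3 / Λ) * (a ^ 2 + (1 + Λ * a ^ 2 / 3) ^ 2 * Q ^ 2)) -
              Real.rpow
                ((a ^ 2 - 3 / Λ) ^ 2 +
                  12 * (-(3 / Λ) * (a ^ 2 + (1 + Λ * a ^ 2 / 3) ^ 2 * Q ^ 2)))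
                (3 / 2))) < 36 * M ^ 2 ∧
        36 * M ^ 2 <
          Λ ^ 2 * (2 / 27 *
            (-(a ^ 2 - 3 / Λ) ^ 3 +
              36 * (a ^ 2 - 3 / Λ) *
                (-(3 / Λ) * (a ^ 2 + (1 + Λ * a ^ 2 / 3) ^ 2 * Q ^ 2)) +
              Real.rpow
                ((a ^ 2 - 3 / Λ) ^ 2 +
                  12 * (-(3 / Λ) * (a ^ 2 + (1 + Λ * a ^ 2 / 3) ^ 2 * Q ^ 2)))
                (3 / 2)))) := by
  have hΛ' : (Λ : ℝ) ≠ 0 := ne_of_gt hΛ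
  set K := a ^ 2 + (1 + Λ * a ^ 2 / 3) ^ 2 * Q ^ 2 with hKdef
  obtain ⟨b, hbdef⟩ : ∃ x : ℝ, x = 1 - Λ*a^2/3 := ⟨_, rfl⟩
  have hfun : DeltaR M Λ a Q = fun r : ℝ => -Λ/3*r^4 + b*r^2 - 2*M*r + K := by
    funext r
    simp only [DeltaR, hbdef, hKdef]
    ring
  rw [core M Λ b K (DeltaR M Λ a Q) hfun hM hΛ hK]
  have hbiff : 0 < b ↔ Λ*a^2 < 3 := by
    rw [hbdef]; constructor <;> intro h <;> linarith
  have h9 : 9*(b^2 - 4*Λ*K) = (Λ^2*a^4 - 42*Λ*a^2 + 9) - 4*Λ*(Λ*a^2 + 3)^2*Q^2 := by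
    rw [hbdef, hKdef]; ring
  have hDiff : 0 < b^2 - 4*Λ*K ↔ 4*Λ*(Λ*a^2+3)^2*Q^2 < Λ^2*a^4 - 42*Λ*a^2 + 9 := by
    constructor <;> intro h <;> linarith
  have hXfact : 0 < b^2 - 4*Λ*K →
      (Λ ^ 2 * (2 / 27 *
            (-(a ^ 2 - 3 / Λ) ^ 3 + 36 * (a ^ 2 - 3 / Λ) * (-(3 / Λ) * K) -
              Real.rpow ((a ^ 2 - 3 / Λ) ^ 2 + 12 * (-(3 / Λ) * K)) (3 / 2)))
          = 2*((b^3 + 12*Λ*b*K) - (b^2 - 4*Λ*K)*Real.sqrt (b^2 - 4*Λ*K))/Λ ∧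
        Λ ^ 2 * (2 / 27 *
            (-(a ^ 2 - 3 / Λ) ^ 3 + 36 * (a ^ 2 - 3 / Λ) * (-(3 / Λ) * K) +
              Real.rpow ((a ^ 2 - 3 / Λ) ^ 2 + 12 * (-(3 / Λ) * K)) (3 / 2)))
          = 2*((b^3 + 12*Λ*b*K) + (b^2 - 4*Λ*K)*Real.sqrt (b^2 - 4*Λ*K))/Λ) := by
    intro hD
    have hA : (a ^ 2 - 3 / Λ) ^ 2 + 12 * (-(3 / Λ) * K) = 9*(b^2 - 4*Λ*K)/Λ^2 := by
      rw [hbdef, hKdef]; field_simp; ring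
    have ht : (0:ℝ) < 9*(b^2 - 4*Λ*K)/Λ^2 := by positivity
    have hsq : Real.sqrt (9*(b^2 - 4*Λ*K)/Λ^2) = 3*Real.sqrt (b^2 - 4*Λ*K)/Λ := by
      rw [show 9*(b^2 - 4*Λ*K)/Λ^2 = (3*Real.sqrt (b^2 - 4*Λ*K)/Λ)^2 by
        rw [div_pow, mul_pow, Real.sq_sqrt hD.le]; ring]
      exact Real.sqrt_sq (by positivity)
    have hR : Real.rpow ((a ^ 2 - 3 / Λ) ^ 2 + 12 * (-(3 / Λ) * K)) (3 / 2)
        = 27*(b^2 - 4*Λ*K)*Real.sqrt (b^2 - 4*Λ*K)/Λ^3 := by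
      rw [hA]
      show (9*(b^2 - 4*Λ*K)/Λ^2) ^ ((3:ℝ) / 2) = _
      rw [show (3/2 : ℝ) = 1 + 1/2 by norm_num, Real.rpow_add ht, Real.rpow_one,
        ← Real.sqrt_eq_rpow, hsq]
      field_simp
      ring
    constructor
    · rw [hR, hbdef, hKdef]; field_simp; ring
    · rw [hR, hbdef, hKdef]; field_simp; ring
  constructor
  · rintro ⟨hb, hD, h1, h2⟩
    obtain ⟨hX1, hX2⟩ := hXfact hD
    refine ⟨hbiff.1 hb, hDiff.1 hD, ?_, ?_⟩
    · rw [hX1, div_lt_iff₀ hΛ]; linarith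
    · rw [hX2, lt_div_iff₀ hΛ]; linarith
  · rintro ⟨hc1, hc2, h3, h4⟩
    have hb := hbiff.2 hc1
    have hD := hDiff.2 hc2
    obtain ⟨hX1, hX2⟩ := hXfact hD
    refine ⟨hb, hD, ?_, ?_⟩
    · rw [hX1, div_lt_iff₀ hΛ] at h3; linarith
    · rw [hX2, lt_div_iff₀ hΛ] at h4; linarith
end

section
/- Let r- < r+ be positive real numbers and let f : ℝ → ℝ be twice continuously differentiable on [r-, r+] with f(r-) = f(r+) = 0, f(r) < 0 for all r in (r-, r+), f'(r-) ≠ 0 and f'(r+) ≠ 0, and set kappa- := (1/2) * f'(r-). Let r : ℝ → (r-, r+) be a differentiable function satisfying r'(tau) = f(r(tau)) for all tau in ℝ. Then there exist a constant tau_L ≥ 0 and constants 0 < c ≤ C such that for all tau > tau_L: c * exp(2*kappa-*tau) ≤ r(tau) - r- ≤ C * exp(2*kappa-*tau) and c * exp(2*kappa-*tau) ≤ -f(r(tau)) ≤ C * exp(2*kappa-*tau). -/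
private lemma le_start_of_deriv_nonpos' {F F' : ℝ → ℝ} {a : ℝ}
    (hF : ∀ x, HasDerivAt F (F' x) x) (h : ∀ x, a ≤ x → F' x ≤ 0) :
    ∀ x, a ≤ x → F x ≤ F a := by
  intro x hx
  have hanti : AntitoneOn F (Set.Ici a) := by
    apply antitoneOn_of_deriv_nonpos (convex_Ici a)
    · exact fun y _ => (hF y).continuousAt.continuousWithinAt
    · intro y hy
      exact (hF y).differentiableAt.differentiableWithinAt
    · intro y hy
      rw [interior_Ici] at hy
      rw [(hF y).deriv]
      exact h y (le_of_lt hy)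
  exact hanti Set.self_mem_Ici hx hx

private lemma ge_start_of_deriv_nonneg' {F F' : ℝ → ℝ} {a : ℝ}
    (hF : ∀ x, HasDerivAt F (F' x) x) (h : ∀ x, a ≤ x → 0 ≤ F' x) :
    ∀ x, a ≤ x → F a ≤ F x := by
  intro x hx
  have := le_start_of_deriv_nonpos' (F := fun y => -F y) (F' := fun y => -F' y)
    (fun y => (hF y).neg) (fun y hy => neg_nonpos.mpr (h y hy)) x hx
  simpa using this

private lemma stmt8_core (rm rp κ K δ τ0 : ℝ) (hlt : rm < rp) (f : ℝ → ℝ)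
    (hκneg : κ < 0) (hKpos : 0 < K)
    (hTay : ∀ s ∈ Set.Icc rm rp, |f s - κ * (s - rm)| ≤ K * (s - rm) ^ 2)
    (hδpos : 0 < δ) (hδK : K * δ ≤ -κ / 2)
    (r : ℝ → ℝ) (hran : ∀ τ : ℝ, r τ ∈ Set.Ioo rm rp)
    (hode : ∀ τ : ℝ, HasDerivAt r (f (r τ)) τ)
    (hτ00 : 0 ≤ τ0)
    (hsmall : ∀ τ, τ0 ≤ τ → r τ - rm ≤ δ) :
    ∃ c C : ℝ, 0 < c ∧ c ≤ C ∧
      ∀ τ : ℝ, τ0 ≤ τ →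
        c * Real.exp (κ * τ) ≤ r τ - rm ∧
        r τ - rm ≤ C * Real.exp (κ * τ) ∧
        c * Real.exp (κ * τ) ≤ -f (r τ) ∧
        -f (r τ) ≤ C * Real.exp (κ * τ) := by
  have upos : ∀ τ, 0 < r τ - rm := fun τ => sub_pos.mpr (hran τ).1
  -- pointwise Taylor along trajectory
  have hTr : ∀ τ, |f (r τ) - κ * (r τ - rm)| ≤ K * (r τ - rm) ^ 2 :=
    fun τ => hTay (r τ) (Set.mem_Icc_of_Ioo (hran τ))
  have herr : ∀ τ, τ0 ≤ τ → |f (r τ) - κ * (r τ - rm)| ≤ (-κ / 2) * (r τ - rm) := by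
    intro τ hτ
    refine le_trans (hTr τ) ?_
    have h1 : K * (r τ - rm) ^ 2 = (K * (r τ - rm)) * (r τ - rm) := by ring
    rw [h1]
    apply mul_le_mul_of_nonneg_right _ (upos τ).le
    calc K * (r τ - rm) ≤ K * δ := mul_le_mul_of_nonneg_left (hsmall τ hτ) hKpos.le
      _ ≤ -κ / 2 := hδK
  -- exponential helper
  have hexp : ∀ β τ : ℝ, HasDerivAt (fun t => Real.exp (β * (t - τ0))) (β * Real.exp (β * (τ - τ0))) τ := by
    intro β τ
    have h1 : HasDerivAt (fun t : ℝ => β * (t - τ0)) β τ := by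
      simpa using ((hasDerivAt_id τ).sub_const τ0).const_mul β
    simpa [mul_comm] using h1.exp
  -- Gronwall upper bound:  u τ ≤ δ * exp ((κ/2) (τ - τ0))
  have hgron : ∀ τ, τ0 ≤ τ → r τ - rm ≤ δ * Real.exp ((κ / 2) * (τ - τ0)) := by
    intro τ hτ
    have hG : ∀ t, HasDerivAt (fun t => (r t - rm) * Real.exp (-(κ / 2) * (t - τ0)))
        (f (r t) * Real.exp (-(κ / 2) * (t - τ0)) +
          (r t - rm) * (-(κ / 2) * Real.exp (-(κ / 2) * (t - τ0)))) t :=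
      fun t => ((hode t).sub_const rm).mul (hexp (-(κ / 2)) t)
    have hsign : ∀ t, τ0 ≤ t → f (r t) * Real.exp (-(κ / 2) * (t - τ0)) +
        (r t - rm) * (-(κ / 2) * Real.exp (-(κ / 2) * (t - τ0))) ≤ 0 := by
      intro t ht
      have hE : 0 < Real.exp (-(κ / 2) * (t - τ0)) := Real.exp_pos _
      have h1 := (abs_le.mp (herr t ht)).2
      have h2 : f (r t) ≤ (κ / 2) * (r t - rm) := by linarith
      have h3 : f (r t) * Real.exp (-(κ / 2) * (t - τ0)) +
          (r t - rm) * (-(κ / 2) * Real.exp (-(κ / 2) * (t - τ0))) =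
          (f (r t) - (κ / 2) * (r t - rm)) * Real.exp (-(κ / 2) * (t - τ0)) := by ring
      rw [h3]
      exact mul_nonpos_of_nonpos_of_nonneg (by linarith) hE.le
    have := le_start_of_deriv_nonpos' hG hsign τ hτ
    have h0 : (r τ0 - rm) * Real.exp (-(κ / 2) * (τ0 - τ0)) = r τ0 - rm := by simp
    rw [h0] at this
    have h4 : (r τ - rm) * Real.exp (-(κ / 2) * (τ - τ0)) ≤ δ :=
      le_trans this (hsmall τ0 le_rfl)
    have hE : 0 < Real.exp ((κ / 2) * (τ - τ0)) := Real.exp_pos _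
    calc r τ - rm = (r τ - rm) * Real.exp (-(κ / 2) * (τ - τ0)) * Real.exp ((κ / 2) * (τ - τ0)) := by
          rw [mul_assoc, ← Real.exp_add]; ring_nf; simp
      _ ≤ δ * Real.exp ((κ / 2) * (τ - τ0)) := mul_le_mul_of_nonneg_right h4 hE.le
  have hκne : κ ≠ 0 := ne_of_lt hκneg
  set B := 2 * K * δ / (-κ) with hBdef
  have hBpos : 0 < B := div_pos (by positivity) (by linarith)
  have hv : ∀ τ, HasDerivAt (fun t => Real.log (r t - rm) - κ * t)
      (f (r τ) / (r τ - rm) - κ) τ := by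
    intro τ
    have h1 : HasDerivAt (fun t => Real.log (r t - rm)) (f (r τ) / (r τ - rm)) τ :=
      ((hode τ).sub_const rm).log (ne_of_gt (upos τ))
    have h2 : HasDerivAt (fun t : ℝ => κ * t) κ τ := by
      simpa using (hasDerivAt_id τ).const_mul κ
    exact h1.sub h2
  have hw : ∀ τ, HasDerivAt (fun t => B * (1 - Real.exp ((κ / 2) * (t - τ0))))
      (K * δ * Real.exp ((κ / 2) * (τ - τ0))) τ := by
    intro τ
    have h1 := ((hexp (κ / 2) τ).const_sub 1).const_mul B
    rw [show K * δ * Real.exp ((κ / 2) * (τ - τ0)) = B * -(κ / 2 * Real.exp (κ / 2 * (τ - τ0))) by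
      rw [hBdef, div_mul_eq_mul_div (2 * K * δ) (-κ), eq_div_iff (neg_ne_zero.mpr hκne)]; ring]
    exact h1
  have hvbound : ∀ τ, τ0 ≤ τ →
      |f (r τ) / (r τ - rm) - κ| ≤ K * δ * Real.exp ((κ / 2) * (τ - τ0)) := by
    intro τ hτ
    have hu := upos τ
    have h1 : f (r τ) / (r τ - rm) - κ = (f (r τ) - κ * (r τ - rm)) / (r τ - rm) := by
      field_simp
    rw [h1, abs_div, abs_of_pos hu, div_le_iff₀ hu]
    refine le_trans (hTr τ) ?_
    have h2 : K * (r τ - rm) ≤ K * (δ * Real.exp (κ / 2 * (τ - τ0))) :=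
      mul_le_mul_of_nonneg_left (hgron τ hτ) hKpos.le
    nlinarith [mul_le_mul_of_nonneg_right h2 (upos τ).le]
  have hw0 : B * (1 - Real.exp ((κ / 2) * (τ0 - τ0))) = 0 := by simp
  have hwleB : ∀ τ, B * (1 - Real.exp ((κ / 2) * (τ - τ0))) ≤ B := by
    intro τ
    nlinarith [Real.exp_pos ((κ / 2) * (τ - τ0)), hBpos]
  have hvup : ∀ τ, τ0 ≤ τ →
      Real.log (r τ - rm) - κ * τ ≤ Real.log (r τ0 - rm) - κ * τ0 + B := by
    intro τ hτ
    have hP : ∀ t, HasDerivAt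
        (fun t => (Real.log (r t - rm) - κ * t) - B * (1 - Real.exp ((κ / 2) * (t - τ0))))
        ((f (r t) / (r t - rm) - κ) - K * δ * Real.exp ((κ / 2) * (t - τ0))) t :=
      fun t => (hv t).sub (hw t)
    have hsign : ∀ t, τ0 ≤ t →
        (f (r t) / (r t - rm) - κ) - K * δ * Real.exp ((κ / 2) * (t - τ0)) ≤ 0 := by
      intro t ht
      have := (abs_le.mp (hvbound t ht)).2
      linarith
    have h2 := le_start_of_deriv_nonpos' hP hsign τ hτ
    rw [hw0] at h2
    linarith [hwleB τ]
  have hvlow : ∀ τ, τ0 ≤ τ →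
      Real.log (r τ0 - rm) - κ * τ0 - B ≤ Real.log (r τ - rm) - κ * τ := by
    intro τ hτ
    have hQ : ∀ t, HasDerivAt
        (fun t => (Real.log (r t - rm) - κ * t) + B * (1 - Real.exp ((κ / 2) * (t - τ0))))
        ((f (r t) / (r t - rm) - κ) + K * δ * Real.exp ((κ / 2) * (t - τ0))) t :=
      fun t => (hv t).add (hw t)
    have hsign : ∀ t, τ0 ≤ t →
        0 ≤ (f (r t) / (r t - rm) - κ) + K * δ * Real.exp ((κ / 2) * (t - τ0)) := by
      intro t ht
      have := (abs_le.mp (hvbound t ht)).1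
      linarith
    have h2 := ge_start_of_deriv_nonneg' hQ hsign τ hτ
    rw [hw0] at h2
    linarith [hwleB τ]
  -- final constants
  set a := Real.exp (Real.log (r τ0 - rm) - κ * τ0 - B) with hadef
  set A := Real.exp (Real.log (r τ0 - rm) - κ * τ0 + B) with hAdef
  have hapos : 0 < a := Real.exp_pos _
  have hApos : 0 < A := Real.exp_pos _
  have haA : a ≤ A := Real.exp_le_exp.mpr (by linarith)
  have hua : ∀ τ, τ0 ≤ τ → a * Real.exp (κ * τ) ≤ r τ - rm := by
    intro τ hτ
    have h1 : a * Real.exp (κ * τ) = Real.exp (Real.log (r τ0 - rm) - κ * τ0 - B + κ * τ) := by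
      rw [hadef, ← Real.exp_add]
    rw [h1, ← Real.exp_log (upos τ)]
    exact Real.exp_le_exp.mpr (by linarith [hvlow τ hτ])
  have huA : ∀ τ, τ0 ≤ τ → r τ - rm ≤ A * Real.exp (κ * τ) := by
    intro τ hτ
    have h1 : A * Real.exp (κ * τ) = Real.exp (Real.log (r τ0 - rm) - κ * τ0 + B + κ * τ) := by
      rw [hAdef, ← Real.exp_add]
    rw [h1, ← Real.exp_log (upos τ)]
    exact Real.exp_le_exp.mpr (by linarith [hvup τ hτ])
  refine ⟨min a (-κ / 2 * a), max A (-3 * κ / 2 * A), ?_, ?_, ?_⟩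
  · exact lt_min hapos (mul_pos (by linarith) hapos)
  · calc min a (-κ / 2 * a) ≤ a := min_le_left _ _
      _ ≤ A := haA
      _ ≤ max A (-3 * κ / 2 * A) := le_max_left _ _
  · intro τ hτ
    have hEκ : 0 < Real.exp (κ * τ) := Real.exp_pos _
    have herr2 := abs_le.mp (herr τ hτ)
    have hu1 := hua τ hτ
    have hu2 := huA τ hτ
    have hcle : min a (-κ / 2 * a) * Real.exp (κ * τ) ≤ a * Real.exp (κ * τ) :=
      mul_le_mul_of_nonneg_right (min_le_left _ _) hEκ.le
    have hcle2 : min a (-κ / 2 * a) * Real.exp (κ * τ) ≤ -κ / 2 * a * Real.exp (κ * τ) :=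
      mul_le_mul_of_nonneg_right (min_le_right _ _) hEκ.le
    have hCge : A * Real.exp (κ * τ) ≤ max A (-3 * κ / 2 * A) * Real.exp (κ * τ) :=
      mul_le_mul_of_nonneg_right (le_max_left _ _) hEκ.le
    have hCge2 : -3 * κ / 2 * A * Real.exp (κ * τ) ≤ max A (-3 * κ / 2 * A) * Real.exp (κ * τ) :=
      mul_le_mul_of_nonneg_right (le_max_right _ _) hEκ.le
    refine ⟨le_trans hcle hu1, le_trans hu2 hCge, ?_, ?_⟩
    · -- c e ≤ -κ/2 * a * e ≤ -κ/2 * u ≤ -f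
      have h3 : -κ / 2 * (r τ - rm) ≤ -f (r τ) := by linarith [herr2.2]
      have h4 : -κ / 2 * a * Real.exp (κ * τ) ≤ -κ / 2 * (r τ - rm) := by
        have := mul_le_mul_of_nonneg_left hu1 (by linarith : (0:ℝ) ≤ -κ / 2)
        linarith [this]
      linarith
    · have h3 : -f (r τ) ≤ -3 * κ / 2 * (r τ - rm) := by linarith [herr2.1]
      have h4 : -3 * κ / 2 * (r τ - rm) ≤ -3 * κ / 2 * A * Real.exp (κ * τ) := by
        have := mul_le_mul_of_nonneg_left hu2 (by linarith : (0:ℝ) ≤ -3 * κ / 2)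
        linarith [this]
      linarith




/-- along a solution of `dr/dτ = f(r)` staying in `(r₋, r₊)`,
the quantities `r(τ) - r₋` and `-f(r(τ))` decay exactly like `exp(2κ₋τ)` as
`τ → +∞`, where `κ₋ = f'(r₋)/2`. -/
theorem stmt8 (rm rp : ℝ) (hrm : 0 < rm) (hlt : rm < rp) (f : ℝ → ℝ)
    (hf : ContDiffOn ℝ 2 f (Set.Icc rm rp))
    (hfm : f rm = 0) (hfp : f rp = 0)
    (hneg : ∀ s ∈ Set.Ioo rm rp, f s < 0)
    (hdm : derivWithin f (Set.Icc rm rp) rm ≠ 0)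
    (hdp : derivWithin f (Set.Icc rm rp) rp ≠ 0)
    (r : ℝ → ℝ) (hran : ∀ τ : ℝ, r τ ∈ Set.Ioo rm rp)
    (hode : ∀ τ : ℝ, HasDerivAt r (f (r τ)) τ) :
    ∃ τL ≥ (0 : ℝ), ∃ c C : ℝ, 0 < c ∧ c ≤ C ∧
      ∀ τ : ℝ, τ > τL →
        c * Real.exp (2 * (1 / 2 * derivWithin f (Set.Icc rm rp) rm) * τ) ≤ r τ - rm ∧
        r τ - rm ≤ C * Real.exp (2 * (1 / 2 * derivWithin f (Set.Icc rm rp) rm) * τ) ∧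
        c * Real.exp (2 * (1 / 2 * derivWithin f (Set.Icc rm rp) rm) * τ) ≤ -f (r τ) ∧
        -f (r τ) ≤ C * Real.exp (2 * (1 / 2 * derivWithin f (Set.Icc rm rp) rm) * τ) := by
  set κ := derivWithin f (Set.Icc rm rp) rm with hκdef
  set g := derivWithin f (Set.Icc rm rp) with hgdef
  have hUD : UniqueDiffOn ℝ (Set.Icc rm rp) := uniqueDiffOn_Icc hlt
  have hdiff : DifferentiableOn ℝ f (Set.Icc rm rp) := hf.differentiableOn two_ne_zero
  have upos : ∀ τ, 0 < r τ - rm := fun τ => sub_pos.mpr (hran τ).1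
  -- f ≤ 0 on Icc
  have hfle : ∀ s ∈ Set.Icc rm rp, f s ≤ 0 := by
    intro s hs
    rcases eq_or_lt_of_le hs.1 with h1 | h1
    · rw [← h1]; exact le_of_eq hfm
    rcases eq_or_lt_of_le hs.2 with h2 | h2
    · rw [h2]; exact le_of_eq hfp
    · exact le_of_lt (hneg s ⟨h1, h2⟩)
  -- κ < 0
  have hκneg : κ < 0 := by
    have hdw : HasDerivWithinAt f κ (Set.Icc rm rp) rm :=
      (hdiff rm ⟨le_refl _, hlt.le⟩).hasDerivWithinAt
    have ht : Filter.Tendsto (slope f rm) (nhdsWithin rm (Set.Icc rm rp \ {rm})) (nhds κ) :=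
      hasDerivWithinAt_iff_tendsto_slope.1 hdw
    have hsub : Set.Ioc rm rp ⊆ Set.Icc rm rp \ {rm} := by
      intro s hs
      exact ⟨⟨hs.1.le, hs.2⟩, by simp [ne_of_gt hs.1]⟩
    have ht2 : Filter.Tendsto (slope f rm) (nhdsWithin rm (Set.Ioc rm rp)) (nhds κ) :=
      ht.mono_left (nhdsWithin_mono _ hsub)
    haveI : (nhdsWithin rm (Set.Ioc rm rp)).NeBot := by
      rw [nhdsWithin_Ioc_eq_nhdsGT hlt]
      infer_instance
    have hκ0 : κ ≤ 0 := by
      refine le_of_tendsto ht2 ?_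
      filter_upwards [self_mem_nhdsWithin] with s hs
      rw [slope_def_field]
      have h1 : f s ≤ 0 := hfle s ⟨hs.1.le, hs.2⟩
      have hd : 0 < s - rm := sub_pos.mpr hs.1
      exact div_nonpos_of_nonpos_of_nonneg (by rw [hfm]; simpa using h1) hd.le
    exact lt_of_le_of_ne hκ0 hdm
  -- Taylor bound
  have hg1 : ContDiffOn ℝ 1 g (Set.Icc rm rp) := hf.derivWithin hUD (by norm_num)
  have hgdiff : DifferentiableOn ℝ g (Set.Icc rm rp) := hg1.differentiableOn one_ne_zero
  have hg2cont : ContinuousOn (derivWithin g (Set.Icc rm rp)) (Set.Icc rm rp) :=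
    hg1.continuousOn_derivWithin hUD le_rfl
  obtain ⟨K2, hK2⟩ := isCompact_Icc.exists_bound_of_continuousOn hg2cont
  set K := max K2 1 with hKdef
  have hKpos : (0:ℝ) < K := lt_of_lt_of_le one_pos (le_max_right _ _)
  have hK2' : ∀ x ∈ Set.Icc rm rp, ‖derivWithin g (Set.Icc rm rp) x‖ ≤ K :=
    fun x hx => le_trans (hK2 x hx) (le_max_left _ _)
  have hLip : ∀ s ∈ Set.Icc rm rp, |g s - κ| ≤ K * (s - rm) := by
    intro s hs
    have h1 := Convex.norm_image_sub_le_of_norm_derivWithin_le hgdiff hK2'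
      (convex_Icc rm rp) ⟨le_refl rm, hlt.le⟩ hs
    calc |g s - κ| ≤ K * ‖s - rm‖ := h1
      _ = K * (s - rm) := by rw [Real.norm_eq_abs, abs_of_nonneg (sub_nonneg.mpr hs.1)]
  have hTay : ∀ s ∈ Set.Icc rm rp, |f s - κ * (s - rm)| ≤ K * (s - rm) ^ 2 := by
    intro s hs
    have hsubset : Set.Icc rm s ⊆ Set.Icc rm rp := Set.Icc_subset_Icc le_rfl hs.2
    have hh : ∀ t ∈ Set.Icc rm s,
        HasDerivWithinAt (fun t => f t - κ * t) (g t - κ) (Set.Icc rm s) t := by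
      intro t ht
      have h1 : HasDerivWithinAt f (g t) (Set.Icc rm s) t :=
        ((hdiff t (hsubset ht)).hasDerivWithinAt).mono hsubset
      have h2 : HasDerivWithinAt (fun t : ℝ => κ * t) κ (Set.Icc rm s) t := by
        simpa using ((hasDerivAt_id t).const_mul κ).hasDerivWithinAt
      exact h1.sub h2
    have hbnd : ∀ t ∈ Set.Icc rm s, ‖g t - κ‖ ≤ K * (s - rm) := by
      intro t ht
      calc ‖g t - κ‖ ≤ K * (t - rm) := hLip t (hsubset ht)
        _ ≤ K * (s - rm) := mul_le_mul_of_nonneg_left (by linarith [ht.2]) hKpos.le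
    have h1 := Convex.norm_image_sub_le_of_norm_hasDerivWithin_le hh hbnd
      (convex_Icc rm s) (Set.left_mem_Icc.mpr hs.1) (Set.right_mem_Icc.mpr hs.1)
    have heq : (f s - κ * s) - (f rm - κ * rm) = f s - κ * (s - rm) := by rw [hfm]; ring
    rw [heq] at h1
    calc |f s - κ * (s - rm)| ≤ K * (s - rm) * ‖s - rm‖ := h1
      _ = K * (s - rm) ^ 2 := by
          rw [Real.norm_eq_abs, abs_of_nonneg (sub_nonneg.mpr hs.1)]; ring
  -- choice of δ
  set δ := -κ / (2 * K) with hδdef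
  have hδpos : 0 < δ := div_pos (by linarith) (by positivity)
  have hδK : K * δ ≤ -κ / 2 := by
    rw [hδdef]
    rw [mul_div_assoc']
    rw [div_le_div_iff₀ (by positivity) (by norm_num)]
    ring_nf
    nlinarith [hKpos]
  -- monotonicity of r
  have rsanti : StrictAnti r :=
    strictAnti_of_hasDerivAt_neg hode (fun τ => hneg _ (hran τ))
  -- existence of τ0
  have hτ0ex : ∃ τ0, 0 ≤ τ0 ∧ r τ0 - rm ≤ δ := by
    by_contra hcon
    push_neg at hcon
    have h0 : ∀ τ, 0 ≤ τ → rm + δ < r τ := fun τ hτ => by linarith [hcon τ hτ]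
    have hS : Set.Icc (rm + δ) (r 0) ⊆ Set.Ioo rm rp := by
      intro s hs
      exact ⟨lt_of_lt_of_le (by linarith) hs.1, lt_of_le_of_lt hs.2 (hran 0).2⟩
    have hne : (Set.Icc (rm + δ) (r 0)).Nonempty := ⟨r 0, ⟨(h0 0 le_rfl).le, le_rfl⟩⟩
    obtain ⟨x, hxS, hxmax⟩ := isCompact_Icc.exists_isMaxOn hne
      ((hf.continuousOn).mono (Set.Subset.trans hS Set.Ioo_subset_Icc_self))
    set m := -f x with hmdef
    have hmpos : 0 < m := by simpa [hmdef] using hneg x (hS hxS)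
    have hmem : ∀ τ, 0 ≤ τ → r τ ∈ Set.Icc (rm + δ) (r 0) :=
      fun τ hτ => ⟨(h0 τ hτ).le, rsanti.antitone hτ⟩
    have hkey : ∀ τ, 0 ≤ τ → r τ + m * τ ≤ r 0 + m * 0 := by
      apply le_start_of_deriv_nonpos' (F' := fun τ => f (r τ) + m)
      · intro τ
        have h2 : HasDerivAt (fun t : ℝ => m * t) m τ := by
          simpa using (hasDerivAt_id τ).const_mul m
        exact (hode τ).add h2
      · intro τ hτ
        have h1 : f (r τ) ≤ f x := hxmax (hmem τ hτ)
        show f (r τ) + m ≤ 0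
        rw [hmdef]; linarith
    set T := (r 0 - rm) / m + 1 with hTdef
    have hT0 : 0 ≤ T := by
      have h1 : 0 < (r 0 - rm) / m := div_pos (by linarith [upos 0]) hmpos
      rw [hTdef]; linarith
    have hmT : m * T = (r 0 - rm) + m := by
      rw [hTdef]; field_simp
    linarith [(hran T).1, hkey T hT0, hmpos]
  obtain ⟨τ0, hτ00, hτ0δ⟩ := hτ0ex
  have hsmall : ∀ τ, τ0 ≤ τ → r τ - rm ≤ δ := by
    intro τ hτ
    have := rsanti.antitone hτ
    linarith
  obtain ⟨c, C, hc, hcC, hbounds⟩ :=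
    stmt8_core rm rp κ K δ τ0 hlt f hκneg hKpos hTay hδpos hδK r hran hode hτ00 hsmall
  refine ⟨τ0, hτ00, c, C, hc, hcC, ?_⟩
  intro τ hτ
  have heq : 2 * (1 / 2 * κ) * τ = κ * τ := by ring
  rw [heq]
  exact hbounds τ (le_of_lt hτ)
end

section
/- Let r- < r+ be positive real numbers and let f : ℝ → ℝ be twice continuously differentiable on [r-, r+] with f(r-) = f(r+) = 0, f(r) < 0 for all r in (r-, r+), f'(r-) ≠ 0 and f'(r+) ≠ 0, and set kappa+ := (1/2) * f'(r+). Let r : ℝ → (r-, r+) be a differentiable function satisfying r'(tau) = f(r(tau)) for all tau in ℝ. Then there exist a constant tau_L ≥ 0 and constants 0 < c ≤ C such that for all tau < -tau_L: c * exp(2*kappa+*tau) ≤ r+ - r(tau) ≤ C * exp(2*kappa+*tau) and c * exp(2*kappa+*tau) ≤ -f(r(tau)) ≤ C * exp(2*kappa+*tau). -/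
open Topology Filter

private lemma mono_from_deriv {g g' : ℝ → ℝ} {a : ℝ} (hg : ∀ x, HasDerivAt g (g' x) x)
    (h0 : ∀ x < a, 0 ≤ g' x) {x : ℝ} (hx : x ≤ a) : g x ≤ g a := by
  have hmono : MonotoneOn g (Set.Iic a) := by
    apply monotoneOn_of_deriv_nonneg (convex_Iic a)
    · exact fun y _ => (hg y).continuousAt.continuousWithinAt
    · exact fun y _ => (hg y).differentiableAt.differentiableWithinAt
    · intro y hy
      rw [interior_Iic] at hy
      rw [(hg y).deriv]
      exact h0 y hy
  exact hmono (Set.mem_Iic.2 hx) Set.self_mem_Iic hx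

private lemma anti_from_deriv {g g' : ℝ → ℝ} {a : ℝ} (hg : ∀ x, HasDerivAt g (g' x) x)
    (h0 : ∀ x < a, g' x ≤ 0) {x : ℝ} (hx : x ≤ a) : g a ≤ g x := by
  have h := mono_from_deriv (g := fun y => -g y) (g' := fun y => -g' y)
    (fun y => (hg y).neg) (fun y hy => neg_nonneg.2 (h0 y hy)) hx
  simpa using h

set_option maxHeartbeats 2000000 in
/-- along a solution of `dr/dτ = f(r)` staying in `(r₋, r₊)`,
the quantities `r₊ - r(τ)` and `-f(r(τ))` decay exactly like `exp(2κ₊τ)` as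
`τ → -∞`, where `κ₊ = f'(r₊)/2`. -/
theorem stmt9 (rm rp : ℝ) (hrm : 0 < rm) (hlt : rm < rp) (f : ℝ → ℝ)
    (hf : ContDiffOn ℝ 2 f (Set.Icc rm rp))
    (hfm : f rm = 0) (hfp : f rp = 0)
    (hneg : ∀ s ∈ Set.Ioo rm rp, f s < 0)
    (hdm : derivWithin f (Set.Icc rm rp) rm ≠ 0)
    (hdp : derivWithin f (Set.Icc rm rp) rp ≠ 0)
    (r : ℝ → ℝ) (hran : ∀ τ : ℝ, r τ ∈ Set.Ioo rm rp)
    (hode : ∀ τ : ℝ, HasDerivAt r (f (r τ)) τ) :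
    ∃ τL ≥ (0 : ℝ), ∃ c C : ℝ, 0 < c ∧ c ≤ C ∧
      ∀ τ : ℝ, τ < -τL →
        c * Real.exp (2 * (1 / 2 * derivWithin f (Set.Icc rm rp) rp) * τ) ≤ rp - r τ ∧
        rp - r τ ≤ C * Real.exp (2 * (1 / 2 * derivWithin f (Set.Icc rm rp) rp) * τ) ∧
        c * Real.exp (2 * (1 / 2 * derivWithin f (Set.Icc rm rp) rp) * τ) ≤ -f (r τ) ∧
        -f (r τ) ≤ C * Real.exp (2 * (1 / 2 * derivWithin f (Set.Icc rm rp) rp) * τ) := by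
  have hIs : Set.Ioo rm rp ⊆ Set.Icc rm rp := Set.Ioo_subset_Icc_self
  set κ := derivWithin f (Set.Icc rm rp) rp with hκdef
  have hrpI : rp ∈ Set.Icc rm rp := Set.right_mem_Icc.2 hlt.le
  have hfd : DifferentiableOn ℝ f (Set.Icc rm rp) := hf.differentiableOn two_ne_zero
  -- κ > 0
  have hκpos : 0 < κ := by
    have hd : HasDerivWithinAt f κ (Set.Icc rm rp) rp := (hfd rp hrpI).hasDerivWithinAt
    have hδ : HasDerivWithinAt f κ (Set.Ioo rm rp) rp := hd.mono hIs
    have htend := hasDerivWithinAt_iff_tendsto_slope.1 hδ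
    rw [Set.diff_singleton_eq_self (by simp)] at htend
    haveI hne : (𝓝[Set.Ioo rm rp] rp).NeBot := right_nhdsWithin_Ioo_neBot hlt
    have h0 : 0 ≤ κ := by
      refine ge_of_tendsto htend ?_
      filter_upwards [self_mem_nhdsWithin] with s hs
      rw [slope_def_field, hfp, sub_zero]
      exact div_nonneg_of_nonpos (hneg s hs).le (by linarith [hs.2])
    exact h0.lt_of_ne (Ne.symm hdp)
  -- second-derivative quadratic bound
  set F := derivWithin f (Set.Icc rm rp) with hFdef
  have hF1 : ContDiffOn ℝ 1 F (Set.Icc rm rp) :=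
    hf.derivWithin (uniqueDiffOn_Icc hlt) (by norm_num)
  have hFd : DifferentiableOn ℝ F (Set.Icc rm rp) := hF1.differentiableOn one_ne_zero
  have hFC : ContinuousOn (derivWithin F (Set.Icc rm rp)) (Set.Icc rm rp) :=
    (hF1.derivWithin (m := 0) (uniqueDiffOn_Icc hlt) (by norm_num)).continuousOn
  obtain ⟨L, hL⟩ := isCompact_Icc.exists_bound_of_continuousOn hFC
  set M := max L 1 with hMdef
  have hM1 : (1:ℝ) ≤ M := le_max_right _ _
  have hMpos : 0 < M := lt_of_lt_of_le one_pos hM1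
  have hLip : ∀ x ∈ Set.Icc rm rp, |F x - F rp| ≤ M * |x - rp| := by
    intro x hx
    have h := Convex.norm_image_sub_le_of_norm_hasDerivWithin_le
      (f := F) (f' := derivWithin F (Set.Icc rm rp)) (s := Set.Icc rm rp) (C := M)
      (fun y hy => (hFd y hy).hasDerivWithinAt)
      (fun y hy => le_trans (hL y hy) (le_max_left _ _)) (convex_Icc rm rp) hrpI hx
    simpa [Real.norm_eq_abs] using h
  have hquad : ∀ s ∈ Set.Icc rm rp, |f s - κ * (s - rp)| ≤ M * (rp - s)^2 := by
    intro s hs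
    have hsub : Set.Icc s rp ⊆ Set.Icc rm rp := Set.Icc_subset_Icc hs.1 le_rfl
    have hder : ∀ x ∈ Set.Icc s rp,
        HasDerivWithinAt (fun y => f y - κ * y) (F x - κ) (Set.Icc s rp) x := by
      intro x hx
      have h1 : HasDerivWithinAt f (F x) (Set.Icc s rp) x :=
        ((hfd x (hsub hx)).hasDerivWithinAt).mono hsub
      have h2 : HasDerivWithinAt (fun y => κ * y) κ (Set.Icc s rp) x := by
        simpa using (hasDerivWithinAt_id x (Set.Icc s rp)).const_mul κ
      exact h1.sub h2
    have hbound : ∀ x ∈ Set.Icc s rp, ‖F x - κ‖ ≤ M * (rp - s) := by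
      intro x hx
      have h1 : |F x - F rp| ≤ M * |x - rp| := hLip x (hsub hx)
      have h2 : |x - rp| ≤ rp - s := by
        rw [abs_sub_comm, abs_of_nonneg (by linarith [hx.2])]
        linarith [hx.1]
      calc ‖F x - κ‖ = |F x - F rp| := rfl
        _ ≤ M * |x - rp| := h1
        _ ≤ M * (rp - s) := by nlinarith
    have h := Convex.norm_image_sub_le_of_norm_hasDerivWithin_le hder hbound
      (convex_Icc s rp) (Set.right_mem_Icc.2 hs.2) (Set.left_mem_Icc.2 hs.2)
    rw [Real.norm_eq_abs, Real.norm_eq_abs] at h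
    have he : (f s - κ * s) - (f rp - κ * rp) = f s - κ * (s - rp) := by
      rw [hfp]; ring
    rw [he] at h
    calc |f s - κ * (s - rp)| ≤ M * (rp - s) * |s - rp| := h
      _ = M * (rp - s)^2 := by
          rw [abs_sub_comm, abs_of_nonneg (by linarith [hs.2])]; ring
  -- antitonicity of r
  have hanti : ∀ a : ℝ, ∀ τ ≤ a, r a ≤ r τ := by
    intro a τ hτ
    exact anti_from_deriv hode (fun x _ => (hneg _ (hran x)).le) hτ
  -- choose δ, τ1
  set δ := κ / (2 * M) with hδdef
  have hδpos : 0 < δ := div_pos hκpos (by positivity)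
  have hτ1 : ∃ τ1 : ℝ, rp - δ ≤ r τ1 := by
    by_contra h
    push_neg at h
    have hK : Set.Icc (r 0) (rp - δ) ⊆ Set.Ioo rm rp := by
      intro y hy
      exact ⟨lt_of_lt_of_le (hran 0).1 hy.1, lt_of_le_of_lt hy.2 (by linarith)⟩
    obtain ⟨x0, hx0, hmax⟩ := isCompact_Icc.exists_isMaxOn ⟨r 0, Set.left_mem_Icc.2 (h 0).le⟩
      (hf.continuousOn.mono (fun y hy => hIs (hK hy)))
    set ε := -f x0 with hεdef
    have hεpos : 0 < ε := by simpa [hεdef] using neg_pos.2 (hneg x0 (hK hx0))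
    have hKb : ∀ τ ≤ (0:ℝ), f (r τ) ≤ -ε := by
      intro τ hτ
      have : r τ ∈ Set.Icc (r 0) (rp - δ) := ⟨hanti 0 τ hτ, (h τ).le⟩
      simpa [hεdef] using hmax this
    have hg : ∀ x : ℝ, HasDerivAt (fun t => r t + ε * t) (f (r x) + ε) x := by
      intro x
      exact (hode x).add (by simpa using (hasDerivAt_id x).const_mul ε)
    set τ2 := -(rp - r 0) / ε - 1 with hτ2def
    have hτ2neg : τ2 ≤ 0 := by
      have : 0 ≤ (rp - r 0) / ε := div_nonneg (by linarith [(hran 0).2]) hεpos.le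
      rw [hτ2def, neg_div]
      linarith
    have hmono := anti_from_deriv (a := 0) hg
      (fun x hx => by linarith [hKb x hx.le]) hτ2neg
    -- hmono : r 0 + ε * 0 ≤ r τ2 + ε * τ2
    have hts : ε * τ2 = -(rp - r 0) - ε := by
      rw [hτ2def]; field_simp
    have hcon : rp + ε ≤ r τ2 := by
      simp only [mul_zero, add_zero] at hmono
      linarith
    linarith [(hran τ2).2, hεpos]
  obtain ⟨τ1, hτ1⟩ := hτ1
  -- basic facts about u τ = rp - r τ
  have hupos : ∀ τ : ℝ, 0 < rp - r τ := fun τ => by linarith [(hran τ).2]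
  have husmall : ∀ τ ≤ τ1, rp - r τ ≤ δ := by
    intro τ hτ
    have := hanti τ1 τ hτ
    linarith
  -- bounds on -f(r τ) in terms of u
  have hfb : ∀ τ ≤ τ1, κ / 2 * (rp - r τ) ≤ -f (r τ) ∧ -f (r τ) ≤ 3 * κ / 2 * (rp - r τ) := by
    intro τ hτ
    have hq := hquad (r τ) (hIs (hran τ))
    have habs := abs_le.1 hq
    have hu1 : rp - r τ ≤ δ := husmall τ hτ
    have hu0 : 0 < rp - r τ := hupos τ
    have hMu : M * (rp - r τ) ≤ κ / 2 := by
      rw [hδdef] at hu1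
      have h2 : M * (rp - r τ) ≤ M * (κ / (2 * M)) :=
        mul_le_mul_of_nonneg_left hu1 hMpos.le
      have h3 : M * (κ / (2 * M)) = κ / 2 := by
        field_simp
      linarith
    constructor
    · nlinarith [habs.2]
    · nlinarith [habs.1]
  -- exponential upper bound for u
  set A := (rp - r τ1) * Real.exp (-(κ/2) * τ1) with hAdef
  have hApos : 0 < A := mul_pos (hupos τ1) (Real.exp_pos _)
  have hderu : ∀ τ : ℝ, HasDerivAt (fun t => rp - r t) (-f (r τ)) τ :=
    fun τ => (hode τ).const_sub rp
  have hderexp : ∀ b τ : ℝ, HasDerivAt (fun t : ℝ => Real.exp (b * t))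
      (Real.exp (b * τ) * b) τ := by
    intro b τ
    exact HasDerivAt.exp (by simpa using (hasDerivAt_id τ).const_mul b)
  have hφ : ∀ τ ≤ τ1, (rp - r τ) * Real.exp (-(κ/2) * τ) ≤ A := by
    intro τ hτ
    refine mono_from_deriv
      (g := fun t => (rp - r t) * Real.exp (-(κ/2) * t))
      (g' := fun t => (-f (r t)) * Real.exp (-(κ/2) * t)
        + (rp - r t) * (Real.exp (-(κ/2) * t) * (-(κ/2)))) ?_ ?_ hτ
    · exact fun x => (hderu x).mul (hderexp (-(κ/2)) x)
    · intro x hx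
      have hb := (hfb x hx.le).1
      have he : 0 < Real.exp (-(κ/2) * x) := Real.exp_pos _
      have hu0 : 0 < rp - r x := hupos x
      nlinarith
  have hAe : ∀ τ ≤ τ1, rp - r τ ≤ A * Real.exp (κ/2 * τ) := by
    intro τ hτ
    have h := hφ τ hτ
    have he : Real.exp (-(κ/2) * τ) * Real.exp (κ/2 * τ) = 1 := by
      rw [← Real.exp_add]; ring_nf; exact Real.exp_zero
    calc rp - r τ = (rp - r τ) * Real.exp (-(κ/2) * τ) * Real.exp (κ/2 * τ) := by
          rw [mul_assoc, he, mul_one]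
      _ ≤ A * Real.exp (κ/2 * τ) := by
          exact mul_le_mul_of_nonneg_right h (Real.exp_pos _).le
  -- the logarithmic correction v
  set B := 2 * M * A / κ with hBdef
  have hBpos : 0 < B := by positivity
  set D := B * Real.exp (κ/2 * τ1) with hDdef
  have hDpos : 0 < D := mul_pos hBpos (Real.exp_pos _)
  have hderv : ∀ τ : ℝ, HasDerivAt (fun t => Real.log (rp - r t) - κ * t)
      (-f (r τ) / (rp - r τ) - κ) τ := by
    intro τ
    exact ((hderu τ).log (hupos τ).ne').sub (by simpa using (hasDerivAt_id τ).const_mul κ)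
  have hvb : ∀ τ ≤ τ1, |(-f (r τ)) / (rp - r τ) - κ| ≤ M * A * Real.exp (κ/2 * τ) := by
    intro τ hτ
    have hu0 : 0 < rp - r τ := hupos τ
    have hq := hquad (r τ) (hIs (hran τ))
    have heq : (-f (r τ)) / (rp - r τ) - κ = -((f (r τ) - κ * (r τ - rp)) / (rp - r τ)) := by
      field_simp
      ring
    rw [heq, abs_neg, abs_div, abs_of_pos hu0]
    have h2 : |f (r τ) - κ * (r τ - rp)| / (rp - r τ) ≤ M * (rp - r τ) := by
      rw [div_le_iff₀ hu0]
      calc |f (r τ) - κ * (r τ - rp)| ≤ M * (rp - r τ)^2 := hq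
        _ = M * (rp - r τ) * (rp - r τ) := by ring
    refine h2.trans ?_
    have := hAe τ hτ
    nlinarith [hMpos]
  have hvub : ∀ τ ≤ τ1, Real.log (rp - r τ) - κ * τ ≤ Real.log (rp - r τ1) - κ * τ1 + D := by
    intro τ hτ
    have h := mono_from_deriv
      (g := fun t => Real.log (rp - r t) - κ * t + B * Real.exp (κ/2 * t))
      (g' := fun t => (-f (r t) / (rp - r t) - κ) + B * (Real.exp (κ/2 * t) * (κ/2))) ?_ ?_ hτ
    · have hBe : 0 ≤ B * Real.exp (κ/2 * τ) := by positivity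
      rw [hDdef]
      linarith [h]
    · intro x
      exact (hderv x).add (by simpa [mul_comm, mul_assoc, mul_left_comm] using (hderexp (κ/2) x).const_mul B)
    · intro x hx
      have hb := hvb x hx.le
      have h1 := (abs_le.1 hb).1
      have : B * (Real.exp (κ/2 * x) * (κ/2)) = M * A * Real.exp (κ/2 * x) := by
        rw [hBdef]; field_simp
      simp only [this]
      linarith
  have hvlb : ∀ τ ≤ τ1, Real.log (rp - r τ1) - κ * τ1 - D ≤ Real.log (rp - r τ) - κ * τ := by
    intro τ hτ
    have h := anti_from_deriv
      (g := fun t => Real.log (rp - r t) - κ * t - B * Real.exp (κ/2 * t))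
      (g' := fun t => (-f (r t) / (rp - r t) - κ) - B * (Real.exp (κ/2 * t) * (κ/2))) ?_ ?_ hτ
    · have hBe : 0 ≤ B * Real.exp (κ/2 * τ) := by positivity
      rw [hDdef]
      linarith [h]
    · intro x
      exact (hderv x).sub (by simpa [mul_comm, mul_assoc, mul_left_comm] using (hderexp (κ/2) x).const_mul B)
    · intro x hx
      have hb := hvb x hx.le
      have h1 := (abs_le.1 hb).2
      have : B * (Real.exp (κ/2 * x) * (κ/2)) = M * A * Real.exp (κ/2 * x) := by
        rw [hBdef]; field_simp
      simp only [this]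
      linarith
  -- the two-sided exponential bounds for u
  set v1 := Real.log (rp - r τ1) - κ * τ1 with hv1def
  set c₀ := Real.exp (v1 - D) with hc0def
  set C₀ := Real.exp (v1 + D) with hC0def
  have hc0pos : 0 < c₀ := Real.exp_pos _
  have hC0pos : 0 < C₀ := Real.exp_pos _
  have hc0C0 : c₀ ≤ C₀ := Real.exp_le_exp.2 (by linarith)
  have hub : ∀ τ ≤ τ1, c₀ * Real.exp (κ * τ) ≤ rp - r τ ∧ rp - r τ ≤ C₀ * Real.exp (κ * τ) := by
    intro τ hτ
    have hulog : rp - r τ = Real.exp ((Real.log (rp - r τ) - κ * τ) + κ * τ) := by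
      rw [sub_add_cancel, Real.exp_log (hupos τ)]
    constructor
    · rw [hulog, hc0def, ← Real.exp_add]
      exact Real.exp_le_exp.2 (by linarith [hvlb τ hτ])
    · rw [hulog, hC0def, ← Real.exp_add]
      exact Real.exp_le_exp.2 (by linarith [hvub τ hτ])
  -- assemble
  refine ⟨max 0 (-τ1), le_max_left _ _, min c₀ (κ/2 * c₀), max C₀ (3*κ/2 * C₀), ?_, ?_, ?_⟩
  · exact lt_min hc0pos (by positivity)
  · calc min c₀ (κ/2 * c₀) ≤ c₀ := min_le_left _ _
      _ ≤ C₀ := hc0C0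
      _ ≤ max C₀ (3*κ/2 * C₀) := le_max_left _ _
  · intro τ hτ
    have hττ1 : τ ≤ τ1 := by
      have h1 : -max 0 (-τ1) ≤ τ1 := by
        have := le_max_right 0 (-τ1)
        linarith
      linarith
    have hexp : 2 * (1/2 * κ) * τ = κ * τ := by ring
    rw [hexp]
    have he : 0 < Real.exp (κ * τ) := Real.exp_pos _
    obtain ⟨hu1, hu2⟩ := hub τ hττ1
    obtain ⟨hf1, hf2⟩ := hfb τ hττ1
    have hminle : min c₀ (κ/2 * c₀) ≤ c₀ := min_le_left _ _
    have hminle2 : min c₀ (κ/2 * c₀) ≤ κ/2 * c₀ := min_le_right _ _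
    have hmaxge : C₀ ≤ max C₀ (3*κ/2 * C₀) := le_max_left _ _
    have hmaxge2 : 3*κ/2 * C₀ ≤ max C₀ (3*κ/2 * C₀) := le_max_right _ _
    refine ⟨?_, ?_, ?_, ?_⟩
    · nlinarith
    · nlinarith
    · nlinarith
    · nlinarith
end
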